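/- arXiv:1109.5316 — 5 statements merged into one kernel-verified Lean document; each statement's English description precedes it below -/
import Mathlib

section
/- Under Assumption (A1), the function x ↦ V(x) is continuous, concave, and non-decreasing on [0,∞). -/
open MeasureTheory

namespace QH

variable {Ω : Type*} [MeasurableSpace Ω]

/-- The set of nonnegative measurable random variables. -/
def L0plus (Ω : Type*) [MeasurableSpace Ω] : Set (Ω → ℝ) :=
  {f | Measurable f ∧ ∀ ω, 0 ≤ f ω}

/-- A randomized test: a measurable function with values in `[0,1]`. -/
def IsRandTest (X : Ω → ℝ) : Prop :=
  Measurable X ∧ ∀ ω, X ω ∈ Set.Icc (0 : ℝ) 1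

/-- The feasible randomized tests for significance level `x` and null collection `H`. -/
def Tests (μ : Measure Ω) (H : Set (Ω → ℝ)) (x : ℝ) : Set (Ω → ℝ) :=
  {X | IsRandTest X ∧ ∀ h ∈ H, ∫ ω, h ω * X ω ∂μ ≤ x}

/-- The worst-case power of a test `X` over the alternative collection `G`. -/
noncomputable def powerInf (μ : Measure Ω) (G : Set (Ω → ℝ)) (X : Ω → ℝ) : ℝ :=
  sInf ((fun g => ∫ ω, g ω * X ω ∂μ) '' G)

/-- The value of the randomized composite hypothesis testing problem. -/
noncomputable def V (μ : Measure Ω) (G H : Set (Ω → ℝ)) (x : ℝ) : ℝ :=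
  sSup (powerInf μ G '' Tests μ H x)

/-- The value of the pure composite hypothesis testing problem. -/
noncomputable def V1 (μ : Measure Ω) (G H : Set (Ω → ℝ)) (x : ℝ) : ℝ :=
  sSup (powerInf μ G '' {X ∈ Tests μ H x | ∀ ω, X ω = 0 ∨ X ω = 1})

/-- The set `ℋₓ` of nonnegative random variables that satisfy the budget
constraint against every feasible randomized test. -/
def HxSet (μ : Measure Ω) (H : Set (Ω → ℝ)) (x : ℝ) : Set (Ω → ℝ) :=
  {h | h ∈ L0plus Ω ∧ ∀ X ∈ Tests μ H x, ∫ ω, h ω * X ω ∂μ ≤ x}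

/-- A set of (nonnegative) random variables is closed under convergence in probability,
as a subset of `L⁰⁺`. -/
def ClosedInProb (μ : Measure Ω) (S : Set (Ω → ℝ)) : Prop :=
  ∀ (f : ℕ → Ω → ℝ) (g : Ω → ℝ), (∀ n, f n ∈ S) → g ∈ L0plus Ω →
    TendstoInMeasure μ f Filter.atTop g → g ∈ S

/-- The closure of a set of random variables under convergence in probability. -/
def clProb (μ : Measure Ω) (S : Set (Ω → ℝ)) : Set (Ω → ℝ) :=
  {g | ∃ f : ℕ → Ω → ℝ, (∀ n, f n ∈ S) ∧ TendstoInMeasure μ f Filter.atTop g}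

/-- Assumption (A1): `𝒢, ℋ ⊆ L⁰⁺`, `sup_{X ∈ 𝒢∪ℋ} 𝔼[X] < ∞`, and `𝒢` is convex and
closed under convergence in probability. -/
def A1 (μ : Measure Ω) (G H : Set (Ω → ℝ)) : Prop :=
  G ⊆ L0plus Ω ∧ H ⊆ L0plus Ω ∧ (∀ f ∈ G ∪ H, Integrable f μ) ∧
  BddAbove ((fun f => ∫ ω, f ω ∂μ) '' (G ∪ H)) ∧
  Convex ℝ G ∧ ClosedInProb μ G

/-- The smallest σ-algebra making every random variable in `G ∪ H` measurable. -/
def sigmaGen (G H : Set (Ω → ℝ)) : MeasurableSpace Ω :=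
  ⨆ f ∈ G ∪ H, MeasurableSpace.comap f inferInstance

/-- The Neyman–Pearson conditions at level `x` for the tuple `(Ĝ, Ĥ, â, X̂, B)`. -/
def NPconds (μ : Measure Ω) (G H : Set (Ω → ℝ)) (x : ℝ)
    (Ghat Hhat : Ω → ℝ) (ahat : ℝ) (Xhat B : Ω → ℝ) : Prop :=
  Ghat ∈ G ∧ Hhat ∈ clProb μ (convexHull ℝ H) ∧ 0 ≤ ahat ∧ Xhat ∈ Tests μ H x ∧
  Measurable B ∧ (∀ ω, B ω ∈ Set.Icc (0 : ℝ) 1) ∧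
  (∀ ω, Xhat ω = (if ahat * Hhat ω < Ghat ω then 1 else 0)
      + B ω * (if Ghat ω = ahat * Hhat ω then 1 else 0)) ∧
  (∀ h ∈ H, ∫ ω, h ω * Xhat ω ∂μ ≤ ∫ ω, Hhat ω * Xhat ω ∂μ) ∧
  (∫ ω, Hhat ω * Xhat ω ∂μ = x) ∧
  (∀ g ∈ G, ∫ ω, Ghat ω * Xhat ω ∂μ ≤ ∫ ω, g ω * Xhat ω ∂μ)

end QH

set_option synthInstance.maxHeartbeats 1000000

namespace QHAux

open QH Filter Topology

variable {Ω : Type*} [MeasurableSpace Ω] {μ : Measure Ω}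

/-- Nonempty intersection of a nested sequence of nonempty closed convex bounded
sets in a real Hilbert space. -/
lemma nested_nonempty {E : Type*} [NormedAddCommGroup E] [InnerProductSpace ℝ E]
    [CompleteSpace E] (C : ℕ → Set E) (hne : ∀ n, (C n).Nonempty)
    (hcl : ∀ n, IsClosed (C n)) (hcv : ∀ n, Convex ℝ (C n))
    (hanti : ∀ ⦃m n⦄, m ≤ n → C n ⊆ C m) {R : ℝ}
    (hbd : ∀ n, C n ⊆ Metric.closedBall 0 R) : (⋂ n, C n).Nonempty := by
  have hR : 0 ≤ R := by
    obtain ⟨w, hw⟩ := hne 0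
    have := hbd 0 hw
    rw [Metric.mem_closedBall] at this
    exact le_trans dist_nonneg this
  choose v hv hvn using fun n =>
    exists_norm_eq_iInf_of_complete_convex (hne n) ((hcl n).isComplete) (hcv n) 0
  set d : ℕ → ℝ := fun n => ⨅ w : C n, ‖(0 : E) - w‖ with hd
  have hvd : ∀ n, ‖v n‖ = d n := by
    intro n
    have := hvn n
    rwa [zero_sub, norm_neg] at this
  have hd_le : ∀ n, ∀ w ∈ C n, d n ≤ ‖w‖ := by
    intro n w hw
    have : d n ≤ ‖(0 : E) - w‖ := by
      refine ciInf_le ⟨0, ?_⟩ (⟨w, hw⟩ : C n)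
      rintro x ⟨y, rfl⟩
      exact norm_nonneg _
    rwa [zero_sub, norm_neg] at this
  have hd0 : ∀ n, 0 ≤ d n := by
    intro n
    rw [← hvd n]; exact norm_nonneg _
  have hvR : ∀ n, ‖v n‖ ≤ R := by
    intro n
    have := hbd n (hv n)
    rwa [Metric.mem_closedBall, dist_zero_right] at this
  have hdR : ∀ n, d n ≤ R := fun n => (hvd n) ▸ hvR n
  have hdmono : Monotone d := by
    intro m n hmn
    haveI : Nonempty (C n) := (hne n).to_subtype
    refine le_ciInf fun w => ?_
    have : d m ≤ ‖(w : E)‖ := hd_le m w (hanti hmn w.2)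
    rwa [zero_sub, norm_neg]
  set D : ℝ := sSup (Set.range d) with hD
  have hrne : (Set.range d).Nonempty := ⟨d 0, ⟨0, rfl⟩⟩
  have hrbdd : BddAbove (Set.range d) := ⟨R, by rintro x ⟨n, rfl⟩; exact hdR n⟩
  have hdD : ∀ n, d n ≤ D := fun n => le_csSup hrbdd ⟨n, rfl⟩
  have hDR : D ≤ R := csSup_le hrne (by rintro x ⟨n, rfl⟩; exact hdR n)
  -- key quantitative estimate
  have key : ∀ N m n, N ≤ m → N ≤ n →
      ‖v m - v n‖ ^ 2 ≤ 4 * D ^ 2 - 4 * d N ^ 2 := by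
    intro N m n hm hn
    have hpar := parallelogram_law_with_norm ℝ (v m) (v n)
    have hmid : ((1 : ℝ) / 2) • v m + ((1 : ℝ) / 2) • v n ∈ C N :=
      hcv N (hanti hm (hv m)) (hanti hn (hv n)) (by norm_num) (by norm_num) (by norm_num)
    have h1 : d N ≤ ‖((1 : ℝ) / 2) • v m + ((1 : ℝ) / 2) • v n‖ :=
      hd_le N _ hmid
    have h2 : ‖((1 : ℝ) / 2) • v m + ((1 : ℝ) / 2) • v n‖ = (1 / 2) * ‖v m + v n‖ := by
      rw [← smul_add, norm_smul]
      simp [abs_of_nonneg]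
    have h3 : 2 * d N ≤ ‖v m + v n‖ := by
      rw [h2] at h1; linarith
    have h4 : ‖v m‖ ≤ D := (hvd m) ▸ hdD m
    have h5 : ‖v n‖ ≤ D := (hvd n) ▸ hdD n
    nlinarith [norm_nonneg (v m), norm_nonneg (v n), norm_nonneg (v m + v n),
      norm_nonneg (v m - v n), hd0 N]
  have hcauchy : CauchySeq v := by
    rw [Metric.cauchySeq_iff]
    intro ε hε
    set δ : ℝ := (ε / 2) ^ 2 / (8 * (R + 1)) with hδ
    have hδpos : 0 < δ := by positivity
    obtain ⟨_, ⟨N, rfl⟩, hN⟩ := exists_lt_of_lt_csSup hrne (show D - δ < D by linarith)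
    refine ⟨N, fun m hm n hn => ?_⟩
    have hk := key N m n hm hn
    have hDd : D - d N ≤ δ := by linarith
    have hsum : D + d N ≤ 2 * (R + 1) := by
      have := hdR N; linarith
    have h6 : 4 * D ^ 2 - 4 * d N ^ 2 ≤ (ε / 2) ^ 2 := by
      have hfac : D ^ 2 - d N ^ 2 = (D - d N) * (D + d N) := by ring
      have h7 : (D - d N) * (D + d N) ≤ δ * (2 * (R + 1)) := by
        apply mul_le_mul hDd hsum (by linarith [hd0 N, hdD N]) (le_of_lt hδpos)
      have h8 : δ * (2 * (R + 1)) = (ε / 2) ^ 2 / 4 := by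
        rw [hδ, div_mul_eq_mul_div, div_eq_div_iff (by linarith : (0:ℝ) < 8 * (R + 1)).ne' (by norm_num)]
        ring
      nlinarith
    have h9 : ‖v m - v n‖ ≤ ε / 2 := by
      nlinarith [norm_nonneg (v m - v n)]
    have : dist (v m) (v n) = ‖v m - v n‖ := dist_eq_norm _ _
    rw [this]
    linarith
  obtain ⟨x, hx⟩ := cauchySeq_tendsto_of_complete hcauchy
  refine ⟨x, Set.mem_iInter.2 fun k => ?_⟩
  refine (hcl k).mem_of_tendsto hx ?_
  filter_upwards [eventually_ge_atTop k] with n hn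
  exact hanti hn (hv n)

lemma test_abs {X : Ω → ℝ} (hX : IsRandTest X) (ω : Ω) : |X ω| ≤ 1 := by
  have h := hX.2 ω
  rw [abs_le]
  exact ⟨by linarith [h.1], h.2⟩

lemma intg_mul {f X : Ω → ℝ} (hf : Integrable f μ) (hXm : AEStronglyMeasurable X μ)
    (hX1 : ∀ᵐ ω ∂μ, |X ω| ≤ 1) : Integrable (fun ω => f ω * X ω) μ := by
  have := Integrable.bdd_mul (c := 1) hf hXm
    (by filter_upwards [hX1] with ω hω; rwa [Real.norm_eq_abs])
  simpa [mul_comm] using this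

lemma intg_mul_test {f X : Ω → ℝ} (hf : Integrable f μ) (hX : IsRandTest X) :
    Integrable (fun ω => f ω * X ω) μ :=
  intg_mul hf hX.1.aestronglyMeasurable (Eventually.of_forall (test_abs hX))

lemma integral_mul_test_nonneg {f X : Ω → ℝ} (hf0 : ∀ ω, 0 ≤ f ω) (hX : IsRandTest X) :
    0 ≤ ∫ ω, f ω * X ω ∂μ :=
  integral_nonneg fun ω => mul_nonneg (hf0 ω) (hX.2 ω).1

lemma integral_mul_test_le {f X : Ω → ℝ} (hf : Integrable f μ) (hf0 : ∀ ω, 0 ≤ f ω)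
    (hX : IsRandTest X) : ∫ ω, f ω * X ω ∂μ ≤ ∫ ω, f ω ∂μ := by
  refine integral_mono (intg_mul_test hf hX) hf fun ω => ?_
  exact mul_le_of_le_one_right (hf0 ω) (hX.2 ω).2

lemma zero_mem_tests (H : Set (Ω → ℝ)) {x : ℝ} (hx : 0 ≤ x) :
    (fun _ => (0 : ℝ)) ∈ Tests μ H x := by
  refine ⟨⟨measurable_const, fun ω => by norm_num⟩, fun h hh => ?_⟩
  simpa using hx

lemma tests_mono (H : Set (Ω → ℝ)) {x y : ℝ} (hxy : x ≤ y) :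
    Tests μ H x ⊆ Tests μ H y := fun X hX =>
  ⟨hX.1, fun h hh => le_trans (hX.2 h hh) hxy⟩

lemma integral_mul_combo {f X Y : Ω → ℝ} (hX : Integrable (fun ω => f ω * X ω) μ)
    (hY : Integrable (fun ω => f ω * Y ω) μ) (a b : ℝ) :
    ∫ ω, f ω * (a * X ω + b * Y ω) ∂μ
      = a * ∫ ω, f ω * X ω ∂μ + b * ∫ ω, f ω * Y ω ∂μ := by
  have h : (fun ω => f ω * (a * X ω + b * Y ω))
      = fun ω => a * (f ω * X ω) + b * (f ω * Y ω) := by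
    funext ω; ring
  rw [h, integral_add (hX.const_mul a) (hY.const_mul b), integral_const_mul,
    integral_const_mul]

lemma exists_limit_test [IsProbabilityMeasure μ] {G H : Set (Ω → ℝ)}
    (hGL : G ⊆ L0plus Ω) (hGint : ∀ g ∈ G, Integrable g μ)
    (hHL : H ⊆ L0plus Ω) (hHint : ∀ h ∈ H, Integrable h μ) (c : ℝ)
    (Xs : ℕ → Ω → ℝ) (hXs : ∀ n, Xs n ∈ Tests μ H ((1 / 2 : ℝ) ^ n))
    (hc : ∀ n, ∀ g ∈ G, c ≤ ∫ ω, g ω * Xs n ω ∂μ) :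
    ∃ X ∈ Tests μ H (0 : ℝ), ∀ g ∈ G, c ≤ ∫ ω, g ω * X ω ∂μ := by
  have hmem : ∀ n, MemLp (Xs n) 2 μ := fun n =>
    MemLp.of_bound (hXs n).1.1.aestronglyMeasurable 1
      (Eventually.of_forall fun ω => by
        rw [Real.norm_eq_abs]; exact test_abs (hXs n).1 ω)
  set T : ℕ → Lp ℝ 2 μ := fun n => (hmem n).toLp (Xs n) with hT
  set D : ℕ → Set (Lp ℝ 2 μ) := fun n =>
    {f | (∀ᵐ ω ∂μ, 0 ≤ f ω ∧ f ω ≤ 1) ∧ (∀ g ∈ G, c ≤ ∫ ω, g ω * f ω ∂μ) ∧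
      ∀ h ∈ H, ∫ ω, h ω * f ω ∂μ ≤ (1 / 2 : ℝ) ^ n} with hDdef
  have habs : ∀ f : Lp ℝ 2 μ, (∀ᵐ ω ∂μ, 0 ≤ f ω ∧ f ω ≤ 1) →
      ∀ᵐ ω ∂μ, |f ω| ≤ 1 := by
    intro f hf
    filter_upwards [hf] with ω hω
    rw [abs_le]; exact ⟨by linarith [hω.1], hω.2⟩
  -- convexity of the constraint sets
  have hDcv : ∀ n, Convex ℝ (D n) := by
    intro n f₁ h₁ f₂ h₂ a b ha hb hab
    have hco : ∀ᵐ ω ∂μ, (a • f₁ + b • f₂ : Lp ℝ 2 μ) ω = a * f₁ ω + b * f₂ ω := by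
      filter_upwards [Lp.coeFn_add (a • f₁) (b • f₂), Lp.coeFn_smul a f₁,
        Lp.coeFn_smul b f₂] with ω e1 e2 e3
      rw [e1, Pi.add_apply, e2, e3, Pi.smul_apply, Pi.smul_apply, smul_eq_mul, smul_eq_mul]
    have hb01 : ∀ᵐ ω ∂μ, 0 ≤ (a • f₁ + b • f₂ : Lp ℝ 2 μ) ω ∧
        (a • f₁ + b • f₂ : Lp ℝ 2 μ) ω ≤ 1 := by
      filter_upwards [hco, h₁.1, h₂.1] with ω he hb1 hb2
      rw [he]
      constructor
      · exact add_nonneg (mul_nonneg ha hb1.1) (mul_nonneg hb hb2.1)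
      · nlinarith [hb1.2, hb2.2]
    have hint : ∀ f : Ω → ℝ, Integrable f μ →
        ∫ ω, f ω * (a • f₁ + b • f₂ : Lp ℝ 2 μ) ω ∂μ
          = a * ∫ ω, f ω * f₁ ω ∂μ + b * ∫ ω, f ω * f₂ ω ∂μ := by
      intro f hf
      have hi1 : Integrable (fun ω => f ω * f₁ ω) μ :=
        intg_mul hf (Lp.aestronglyMeasurable f₁) (habs f₁ h₁.1)
      have hi2 : Integrable (fun ω => f ω * f₂ ω) μ :=
        intg_mul hf (Lp.aestronglyMeasurable f₂) (habs f₂ h₂.1)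
      rw [show ∫ ω, f ω * (a • f₁ + b • f₂ : Lp ℝ 2 μ) ω ∂μ
            = ∫ ω, f ω * (a * f₁ ω + b * f₂ ω) ∂μ from
          integral_congr_ae (by filter_upwards [hco] with ω he; rw [he])]
      exact integral_mul_combo hi1 hi2 a b
    refine ⟨hb01, fun g hg => ?_, fun h hh => ?_⟩
    · rw [hint g (hGint g hg)]
      have e1 := mul_le_mul_of_nonneg_left (h₁.2.1 g hg) ha
      have e2 := mul_le_mul_of_nonneg_left (h₂.2.1 g hg) hb
      have e3 : a * c + b * c = c := by rw [← add_mul, hab, one_mul]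
      linarith
    · rw [hint h (hHint h hh)]
      have e1 := mul_le_mul_of_nonneg_left (h₁.2.2 h hh) ha
      have e2 := mul_le_mul_of_nonneg_left (h₂.2.2 h hh) hb
      have e3 : a * ((1:ℝ)/2)^n + b * ((1:ℝ)/2)^n = ((1:ℝ)/2)^n := by
        rw [← add_mul, hab, one_mul]
      linarith
  -- closedness of the constraint sets
  have hDcl : ∀ n, IsClosed (D n) := by
    intro n
    refine IsSeqClosed.isClosed ?_
    intro fs f hfs htend
    have hTIM : TendstoInMeasure μ (fun j => (fs j : Ω → ℝ)) atTop f :=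
      tendstoInMeasure_of_tendsto_Lp htend
    obtain ⟨ns, hns, hae⟩ := hTIM.exists_seq_tendsto_ae
    have hbounds : ∀ᵐ ω ∂μ, ∀ j, 0 ≤ fs (ns j) ω ∧ fs (ns j) ω ≤ 1 :=
      ae_all_iff.2 fun j => (hfs (ns j)).1
    have hb' : ∀ᵐ ω ∂μ, 0 ≤ f ω ∧ f ω ≤ 1 := by
      filter_upwards [hbounds, hae] with ω hbω hconv
      exact ⟨ge_of_tendsto hconv (Eventually.of_forall fun j => (hbω j).1),
        le_of_tendsto hconv (Eventually.of_forall fun j => (hbω j).2)⟩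
    have hlim : ∀ f₀ : Ω → ℝ, Integrable f₀ μ → (∀ ω, 0 ≤ f₀ ω) →
        Tendsto (fun j => ∫ ω, f₀ ω * fs (ns j) ω ∂μ) atTop
          (𝓝 (∫ ω, f₀ ω * f ω ∂μ)) := by
      intro f₀ hf₀ hf₀0
      refine tendsto_integral_of_dominated_convergence (fun ω => f₀ ω)
        (fun j => hf₀.aestronglyMeasurable.mul (Lp.aestronglyMeasurable _)) hf₀ ?_ ?_
      · intro j
        filter_upwards [(hfs (ns j)).1] with ω hω
        rw [Real.norm_eq_abs, abs_mul, abs_of_nonneg (hf₀0 ω), abs_of_nonneg hω.1]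
        exact mul_le_of_le_one_right (hf₀0 ω) hω.2
      · filter_upwards [hae] with ω hconv
        exact hconv.const_mul (f₀ ω)
    refine ⟨hb', fun g hg => ?_, fun h hh => ?_⟩
    · exact ge_of_tendsto (hlim g (hGint g hg) (hGL hg).2)
        (Eventually.of_forall fun j => (hfs (ns j)).2.1 g hg)
    · exact le_of_tendsto (hlim h (hHint h hh) (hHL hh).2)
        (Eventually.of_forall fun j => (hfs (ns j)).2.2 h hh)
  -- the approximating tests belong to the constraint sets
  have hTD : ∀ n k, n ≤ k → T k ∈ D n := by
    intro n k hnk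
    have hco := (hmem k).coeFn_toLp
    have hieq : ∀ f : Ω → ℝ, ∫ ω, f ω * (T k : Ω → ℝ) ω ∂μ = ∫ ω, f ω * Xs k ω ∂μ :=
      fun f => integral_congr_ae (by filter_upwards [hco] with ω he; rw [he])
    refine ⟨?_, fun g hg => ?_, fun h hh => ?_⟩
    · filter_upwards [hco] with ω he
      rw [he]
      exact ⟨((hXs k).1.2 ω).1, ((hXs k).1.2 ω).2⟩
    · rw [hieq g]; exact hc k g hg
    · calc ∫ ω, h ω * (T k : Ω → ℝ) ω ∂μ = ∫ ω, h ω * Xs k ω ∂μ := hieq h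
        _ ≤ (1 / 2 : ℝ) ^ k := (hXs k).2 h hh
        _ ≤ (1 / 2 : ℝ) ^ n := pow_le_pow_of_le_one (by norm_num) (by norm_num) hnk
  -- nested closed convex sets
  set Cs : ℕ → Set (Lp ℝ 2 μ) := fun n => closure (convexHull ℝ (T '' {k | n ≤ k}))
    with hCs
  have hCD : ∀ n, Cs n ⊆ D n := fun n =>
    closure_minimal (convexHull_min
      (by rintro _ ⟨k, hk, rfl⟩; exact hTD n k hk) (hDcv n)) (hDcl n)
  have hTnorm : ∀ k, ‖T k‖ ≤ 1 := by
    intro k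
    rw [hT]
    simp only [Lp.norm_toLp]
    have hle : eLpNorm (Xs k) 2 μ ≤ 1 := by
      have h := eLpNorm_le_of_ae_bound (μ := μ) (p := 2) (f := Xs k) (C := 1)
        (Eventually.of_forall fun ω => by
          rw [Real.norm_eq_abs]; exact test_abs (hXs k).1 ω)
      simpa [measure_univ] using h
    have h2 := ENNReal.toReal_mono (show (1 : ENNReal) ≠ ⊤ by norm_num) hle
    simpa using h2
  have hCball : ∀ n, Cs n ⊆ Metric.closedBall 0 1 := fun n =>
    closure_minimal (convexHull_min
      (by rintro _ ⟨k, _, rfl⟩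
          rw [Metric.mem_closedBall, dist_zero_right]; exact hTnorm k)
      (convex_closedBall _ _)) Metric.isClosed_closedBall
  have hCne : ∀ n, (Cs n).Nonempty := fun n =>
    ⟨T n, subset_closure (subset_convexHull ℝ _ ⟨n, by simp, rfl⟩)⟩
  have hCanti : ∀ ⦃m n : ℕ⦄, m ≤ n → Cs n ⊆ Cs m := fun m n hmn =>
    closure_mono (convexHull_mono (Set.image_mono fun k hk => le_trans hmn hk))
  obtain ⟨v, hv⟩ := nested_nonempty Cs hCne (fun n => isClosed_closure)
    (fun n => (convex_convexHull ℝ _).closure) hCanti hCball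
  have hvD : ∀ n, v ∈ D n := fun n => hCD n (Set.mem_iInter.1 hv n)
  -- build an honest test from the limit
  have hb := (hvD 0).1
  have hmeasv : Measurable (v : Ω → ℝ) := (Lp.stronglyMeasurable v).measurable
  set X : Ω → ℝ := fun ω => max 0 (min 1 ((v : Ω → ℝ) ω)) with hXdef
  have hXmeas : Measurable X := measurable_const.max (measurable_const.min hmeasv)
  have hXrt : IsRandTest X :=
    ⟨hXmeas, fun ω => ⟨le_max_left _ _, max_le zero_le_one (min_le_left _ _)⟩⟩
  have hXae : X =ᵐ[μ] (v : Ω → ℝ) := by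
    filter_upwards [hb] with ω hω
    show max 0 (min 1 ((v : Ω → ℝ) ω)) = (v : Ω → ℝ) ω
    rw [min_eq_right hω.2, max_eq_right hω.1]
  have hint_eq : ∀ f : Ω → ℝ, ∫ ω, f ω * X ω ∂μ = ∫ ω, f ω * (v : Ω → ℝ) ω ∂μ :=
    fun f => integral_congr_ae (by filter_upwards [hXae] with ω he; rw [he])
  refine ⟨X, ⟨hXrt, fun h hh => ?_⟩, fun g hg => ?_⟩
  · have hle : ∀ n : ℕ, ∫ ω, h ω * X ω ∂μ ≤ (1 / 2 : ℝ) ^ n := fun n => by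
      rw [hint_eq h]; exact (hvD n).2.2 h hh
    have htends : Tendsto (fun n : ℕ => ((1 : ℝ) / 2) ^ n) atTop (𝓝 0) :=
      tendsto_pow_atTop_nhds_zero_of_lt_one (by norm_num) (by norm_num)
    exact ge_of_tendsto htends (Eventually.of_forall hle)
  · rw [hint_eq g]; exact (hvD 0).2.1 g hg

end QHAux

/-- Under Assumption (A1), `x ↦ V(x)` is continuous, concave, and
non-decreasing on `[0,∞)`. -/
theorem stmt_4 {Ω : Type*} [MeasurableSpace Ω] (μ : MeasureTheory.Measure Ω)
    [MeasureTheory.IsProbabilityMeasure μ]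
    (G H : Set (Ω → ℝ)) (hA1 : QH.A1 μ G H) :
    ContinuousOn (QH.V μ G H) (Set.Ici 0) ∧
    ConcaveOn ℝ (Set.Ici 0) (QH.V μ G H) ∧
    MonotoneOn (QH.V μ G H) (Set.Ici 0) := by
  classical
  obtain ⟨hGL, hHL, hInt, hBdd, hConv, hCl⟩ := hA1
  have hGint : ∀ g ∈ G, MeasureTheory.Integrable g μ := fun g hg => hInt g (Or.inl hg)
  have hHint : ∀ h ∈ H, MeasureTheory.Integrable h μ := fun h hh => hInt h (Or.inr hh)
  rcases G.eq_empty_or_nonempty with hGe | ⟨g₀, hg₀⟩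
  · -- degenerate case: `G = ∅`, so `V ≡ 0` on `[0,∞)`.
    subst hGe
    have hp : ∀ X : Ω → ℝ, QH.powerInf μ (∅ : Set (Ω → ℝ)) X = 0 := by
      intro X
      unfold QH.powerInf
      simp [Real.sInf_empty]
    have hVz : ∀ x ∈ Set.Ici (0 : ℝ), QH.V μ (∅ : Set (Ω → ℝ)) H x = 0 := by
      intro x hx
      unfold QH.V
      have himg : QH.powerInf μ (∅ : Set (Ω → ℝ)) '' QH.Tests μ H x = {0} := by
        refine Set.eq_singleton_iff_nonempty_unique_mem.2
          ⟨⟨_, Set.mem_image_of_mem _ (QHAux.zero_mem_tests H hx)⟩, ?_⟩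
        rintro _ ⟨X, _, rfl⟩
        exact hp X
      rw [himg, csSup_singleton]
    refine ⟨continuousOn_const.congr hVz, ⟨convex_Ici 0, ?_⟩, ?_⟩
    · intro x hx y hy a b ha hb hab
      rw [hVz x hx, hVz y hy, hVz _ (convex_Ici 0 hx hy ha hb hab)]
      simp
    · intro x hx y hy _
      rw [hVz x hx, hVz y hy]
  · -- main case: `G` nonempty.
    obtain ⟨M, hM⟩ := hBdd
    have hMub : ∀ f ∈ G ∪ H, ∫ ω, f ω ∂μ ≤ M := fun f hf => hM ⟨f, hf, rfl⟩
    have hbb : ∀ X : Ω → ℝ, QH.IsRandTest X →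
        BddBelow ((fun g => ∫ ω, g ω * X ω ∂μ) '' G) := by
      intro X hX
      refine ⟨0, ?_⟩
      rintro _ ⟨g, hg, rfl⟩
      exact QHAux.integral_mul_test_nonneg (hGL hg).2 hX
    have hpile : ∀ X : Ω → ℝ, QH.IsRandTest X → QH.powerInf μ G X ≤ M := by
      intro X hX
      calc QH.powerInf μ G X ≤ ∫ ω, g₀ ω * X ω ∂μ := csInf_le (hbb X hX) ⟨g₀, hg₀, rfl⟩
        _ ≤ ∫ ω, g₀ ω ∂μ := QHAux.integral_mul_test_le (hGint g₀ hg₀) (hGL hg₀).2 hX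
        _ ≤ M := hMub g₀ (Or.inl hg₀)
    have hSbdd : ∀ x : ℝ, BddAbove (QH.powerInf μ G '' QH.Tests μ H x) := by
      intro x
      refine ⟨M, ?_⟩
      rintro _ ⟨X, hX, rfl⟩
      exact hpile X hX.1
    have hSne : ∀ x : ℝ, 0 ≤ x → (QH.powerInf μ G '' QH.Tests μ H x).Nonempty :=
      fun x hx => ⟨_, Set.mem_image_of_mem _ (QHAux.zero_mem_tests H hx)⟩
    have hmono : MonotoneOn (QH.V μ G H) (Set.Ici 0) := by
      intro x hx y _ hxy
      exact csSup_le_csSup (hSbdd y) (hSne x hx)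
        (Set.image_mono (QHAux.tests_mono H hxy))
    have hconc : ConcaveOn ℝ (Set.Ici 0) (QH.V μ G H) := by
      refine ⟨convex_Ici 0, fun x hx y hy a b ha hb hab => ?_⟩
      rw [smul_eq_mul, smul_eq_mul, smul_eq_mul, smul_eq_mul]
      refine le_of_forall_pos_le_add fun ε hε => ?_
      obtain ⟨p, ⟨X, hX, rfl⟩, hpX⟩ := exists_lt_of_lt_csSup (hSne x hx)
        (show QH.V μ G H x - ε < sSup (QH.powerInf μ G '' QH.Tests μ H x) from
          sub_lt_self _ hε)
      obtain ⟨q, ⟨Y, hY, rfl⟩, hpY⟩ := exists_lt_of_lt_csSup (hSne y hy)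
        (show QH.V μ G H y - ε < sSup (QH.powerInf μ G '' QH.Tests μ H y) from
          sub_lt_self _ hε)
      have hZT : (fun ω => a * X ω + b * Y ω) ∈ QH.Tests μ H (a * x + b * y) := by
        refine ⟨⟨(hX.1.1.const_mul a).add (hY.1.1.const_mul b), fun ω => ?_⟩,
          fun h hh => ?_⟩
        · constructor
          · exact add_nonneg (mul_nonneg ha (hX.1.2 ω).1) (mul_nonneg hb (hY.1.2 ω).1)
          · show a * X ω + b * Y ω ≤ 1
            have e1 := mul_le_mul_of_nonneg_left (hX.1.2 ω).2 ha
            have e2 := mul_le_mul_of_nonneg_left (hY.1.2 ω).2 hb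
            have e3 : a * 1 + b * 1 = 1 := by rw [mul_one, mul_one, hab]
            linarith
        · show (∫ ω, h ω * (a * X ω + b * Y ω) ∂μ) ≤ a * x + b * y
          rw [QHAux.integral_mul_combo (QHAux.intg_mul_test (hHint h hh) hX.1)
            (QHAux.intg_mul_test (hHint h hh) hY.1) a b]
          have e1 := mul_le_mul_of_nonneg_left (hX.2 h hh) ha
          have e2 := mul_le_mul_of_nonneg_left (hY.2 h hh) hb
          linarith
      have hpiZ : a * (QH.V μ G H x - ε) + b * (QH.V μ G H y - ε)
          ≤ QH.powerInf μ G (fun ω => a * X ω + b * Y ω) := by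
        refine le_csInf ⟨_, ⟨g₀, hg₀, rfl⟩⟩ ?_
        rintro _ ⟨g, hg, rfl⟩
        show _ ≤ ∫ ω, g ω * (a * X ω + b * Y ω) ∂μ
        rw [QHAux.integral_mul_combo (QHAux.intg_mul_test (hGint g hg) hX.1)
          (QHAux.intg_mul_test (hGint g hg) hY.1) a b]
        have i1 : QH.powerInf μ G X ≤ ∫ ω, g ω * X ω ∂μ :=
          csInf_le (hbb X hX.1) ⟨g, hg, rfl⟩
        have i2 : QH.powerInf μ G Y ≤ ∫ ω, g ω * Y ω ∂μ :=
          csInf_le (hbb Y hY.1) ⟨g, hg, rfl⟩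
        have e1 := mul_le_mul_of_nonneg_left (le_trans (le_of_lt hpX) i1) ha
        have e2 := mul_le_mul_of_nonneg_left (le_trans (le_of_lt hpY) i2) hb
        linarith
      have hle : QH.powerInf μ G (fun ω => a * X ω + b * Y ω)
          ≤ QH.V μ G H (a * x + b * y) :=
        le_csSup (hSbdd _) (Set.mem_image_of_mem _ hZT)
      have hident : a * ε + b * ε = ε := by rw [← add_mul, hab, one_mul]
      nlinarith [hpiZ, hle]
    have hVcont0 : ∀ ε > (0 : ℝ), ∃ δ > (0 : ℝ), ∀ y ∈ Set.Ici (0 : ℝ), y < δ →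
        QH.V μ G H y ≤ QH.V μ G H 0 + ε := by
      intro ε hε
      by_contra hcon
      push_neg at hcon
      have hsel : ∀ n : ℕ, ∃ X ∈ QH.Tests μ H ((1 / 2 : ℝ) ^ n),
          QH.V μ G H 0 + ε < QH.powerInf μ G X := by
        intro n
        obtain ⟨y, hy0, hylt, hVy⟩ := hcon ((1 / 2 : ℝ) ^ n) (by positivity)
        obtain ⟨p, ⟨X, hX, rfl⟩, hp⟩ := exists_lt_of_lt_csSup (hSne y hy0)
          (show QH.V μ G H 0 + ε < sSup (QH.powerInf μ G '' QH.Tests μ H y) from hVy)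
        exact ⟨X, QHAux.tests_mono H (le_of_lt hylt) hX, hp⟩
      choose Xs hXs hpXs using hsel
      have hc : ∀ n, ∀ g ∈ G, QH.V μ G H 0 + ε ≤ ∫ ω, g ω * Xs n ω ∂μ :=
        fun n g hg => le_trans (le_of_lt (hpXs n))
          (csInf_le (hbb (Xs n) (hXs n).1) ⟨g, hg, rfl⟩)
      obtain ⟨X, hXT, hXg⟩ := QHAux.exists_limit_test hGL hGint hHL hHint _ Xs hXs hc
      have h1 : QH.V μ G H 0 + ε ≤ QH.powerInf μ G X := by
        refine le_csInf ⟨_, ⟨g₀, hg₀, rfl⟩⟩ ?_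
        rintro _ ⟨g, hg, rfl⟩
        exact hXg g hg
      have h2 : QH.powerInf μ G X ≤ QH.V μ G H 0 :=
        le_csSup (hSbdd 0) (Set.mem_image_of_mem _ hXT)
      linarith
    refine ⟨?_, hconc, hmono⟩
    have hcontIoi : ContinuousOn (QH.V μ G H) (interior (Set.Ici (0 : ℝ))) :=
      hconc.continuousOn_interior
    intro x hx
    rcases eq_or_lt_of_le (show (0 : ℝ) ≤ x from hx) with h0 | hpos
    · subst h0
      rw [Metric.continuousWithinAt_iff]
      intro ε hε
      obtain ⟨δ, hδ, hδle⟩ := hVcont0 (ε / 2) (by linarith)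
      refine ⟨δ, hδ, fun y hy hyd => ?_⟩
      have hy0 : (0 : ℝ) ≤ y := hy
      have hylt : y < δ := by
        rw [Real.dist_eq, sub_zero, abs_of_nonneg hy0] at hyd
        exact hyd
      have hlow : QH.V μ G H 0 ≤ QH.V μ G H y := hmono Set.self_mem_Ici hy hy0
      have hup := hδle y hy hylt
      rw [Real.dist_eq]
      have : |QH.V μ G H y - QH.V μ G H 0| ≤ ε / 2 :=
        abs_le.2 ⟨by linarith, by linarith⟩
      linarith
    · exact (hcontIoi.continuousAt
        (by rw [interior_Ici]; exact Ioi_mem_nhds hpos)).continuousWithinAt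
end

section
/- Suppose 𝒢 = {Ĝ} and ℋ = {Ĥ} are singletons of integrable nonnegative random variables, let x > 0, and let â ≥ 0 satisfy 𝔼[Ĥ·1_{{Ĝ ≥ âĤ}}] > x > 𝔼[Ĥ·1_{{Ĝ > âĤ}}]. Define the constant B₀ := (x − 𝔼[Ĥ·1_{{Ĝ > âĤ}}]) / 𝔼[Ĥ·1_{{Ĝ = âĤ}}]. Then B₀ ∈ (0,1), the randomized test X̂ := 1_{{Ĝ > âĤ}} + B₀·1_{{Ĝ = âĤ}} satisfies 𝔼[ĤX̂] = x (so X̂ ∈ 𝒳ₓ), and X̂ is optimal: 𝔼[ĜX̂] = V(x). -/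
open MeasureTheory

lemma integrable_mul_test' {Ω : Type*} [MeasurableSpace Ω] {μ : Measure Ω} {f X : Ω → ℝ}
    (hf : Integrable f μ) (hfm : Measurable f) (hXm : Measurable X)
    (hX : ∀ ω, X ω ∈ Set.Icc (0:ℝ) 1) : Integrable (fun ω => f ω * X ω) μ := by
  refine hf.mono ((hfm.mul hXm).aestronglyMeasurable) (Filter.Eventually.of_forall fun ω => ?_)
  rw [Real.norm_eq_abs, Real.norm_eq_abs, abs_mul]
  have h1 : |X ω| ≤ 1 := abs_le.mpr ⟨by linarith [(hX ω).1], (hX ω).2⟩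
  calc |f ω| * |X ω| ≤ |f ω| * 1 := mul_le_mul_of_nonneg_left h1 (abs_nonneg _)
    _ = |f ω| := mul_one _

/-- For singletons `𝒢 = {Ĝ}`, `ℋ = {Ĥ}` of integrable nonnegative random
variables, `x > 0`, and `â ≥ 0` with `𝔼[Ĥ·1_{Ĝ ≥ âĤ}] > x > 𝔼[Ĥ·1_{Ĝ > âĤ}]`, the
constant `B₀ := (x − 𝔼[Ĥ·1_{Ĝ > âĤ}])/𝔼[Ĥ·1_{Ĝ = âĤ}]` lies in `(0,1)`, and the
randomized test `X̂ := 1_{Ĝ > âĤ} + B₀·1_{Ĝ = âĤ}` satisfies `𝔼[ĤX̂] = x`, belongs to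
`𝒳ₓ`, and is optimal: `𝔼[ĜX̂] = V(x)`. -/
theorem stmt_9 {Ω : Type*} [MeasurableSpace Ω] (μ : MeasureTheory.Measure Ω)
    [MeasureTheory.IsProbabilityMeasure μ]
    (Ghat Hhat : Ω → ℝ)
    (hGm : Measurable Ghat) (hGpos : ∀ ω, 0 ≤ Ghat ω) (hGi : MeasureTheory.Integrable Ghat μ)
    (hHm : Measurable Hhat) (hHpos : ∀ ω, 0 ≤ Hhat ω) (hHi : MeasureTheory.Integrable Hhat μ)
    (x : ℝ) (hx : 0 < x) (ahat : ℝ) (ha : 0 ≤ ahat)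
    (hGe : x < ∫ ω, Hhat ω * (if ahat * Hhat ω ≤ Ghat ω then (1 : ℝ) else 0) ∂μ)
    (hGt : ∫ ω, Hhat ω * (if ahat * Hhat ω < Ghat ω then (1 : ℝ) else 0) ∂μ < x) :
    let B0 : ℝ := (x - ∫ ω, Hhat ω * (if ahat * Hhat ω < Ghat ω then (1 : ℝ) else 0) ∂μ) /
      (∫ ω, Hhat ω * (if Ghat ω = ahat * Hhat ω then (1 : ℝ) else 0) ∂μ)
    let Xhat : Ω → ℝ := fun ω => (if ahat * Hhat ω < Ghat ω then 1 else 0)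
      + B0 * (if Ghat ω = ahat * Hhat ω then 1 else 0)
    0 < B0 ∧ B0 < 1 ∧ (∫ ω, Hhat ω * Xhat ω ∂μ = x) ∧
      Xhat ∈ QH.Tests μ {Hhat} x ∧
      (∫ ω, Ghat ω * Xhat ω ∂μ = QH.V μ {Ghat} {Hhat} x) := by
  intro B0 Xhat
  set indlt : Ω → ℝ := fun ω => if ahat * Hhat ω < Ghat ω then (1:ℝ) else 0 with hindlt
  set indeq : Ω → ℝ := fun ω => if Ghat ω = ahat * Hhat ω then (1:ℝ) else 0 with hindeq
  set indle : Ω → ℝ := fun ω => if ahat * Hhat ω ≤ Ghat ω then (1:ℝ) else 0 with hindle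
  have hmlt : Measurable indlt := Measurable.ite (measurableSet_lt (hHm.const_mul _) hGm)
    measurable_const measurable_const
  have hmeq : Measurable indeq := Measurable.ite (measurableSet_eq_fun hGm (hHm.const_mul _))
    measurable_const measurable_const
  have hic : ∀ f : Ω → ℝ, (∀ ω, f ω = 0 ∨ f ω = 1) → ∀ ω, f ω ∈ Set.Icc (0:ℝ) 1 := by
    intro f hf ω
    rcases hf ω with h | h <;> rw [h] <;> constructor <;> norm_num
  have hlt01 : ∀ ω, indlt ω ∈ Set.Icc (0:ℝ) 1 := hic _ fun ω => by
    by_cases h : ahat * Hhat ω < Ghat ω <;> simp [hindlt, h]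
  have heq01 : ∀ ω, indeq ω ∈ Set.Icc (0:ℝ) 1 := hic _ fun ω => by
    by_cases h : Ghat ω = ahat * Hhat ω <;> simp [hindeq, h]
  have hHlt : Integrable (fun ω => Hhat ω * indlt ω) μ :=
    integrable_mul_test' hHi hHm hmlt hlt01
  have hHeq : Integrable (fun ω => Hhat ω * indeq ω) μ :=
    integrable_mul_test' hHi hHm hmeq heq01
  -- splitting of the ≤ indicator
  have hsplit : ∀ ω, Hhat ω * indle ω = Hhat ω * indlt ω + Hhat ω * indeq ω := by
    intro ω
    rcases lt_trichotomy (ahat * Hhat ω) (Ghat ω) with h | h | h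
    · simp [hindlt, hindeq, hindle, h, le_of_lt h, h.ne']
    · simp [hindlt, hindeq, hindle, h, le_of_eq h, lt_irrefl]
    · simp [hindlt, hindeq, hindle, not_le.mpr h, not_lt.mpr (le_of_lt h), (ne_of_lt h)]
  have hIle : (∫ ω, Hhat ω * indle ω ∂μ)
      = (∫ ω, Hhat ω * indlt ω ∂μ) + ∫ ω, Hhat ω * indeq ω ∂μ := by
    rw [← integral_add hHlt hHeq]
    exact integral_congr_ae (Filter.Eventually.of_forall hsplit)
  set Ilt := ∫ ω, Hhat ω * indlt ω ∂μ with hIlt'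
  set Ieq := ∫ ω, Hhat ω * indeq ω ∂μ with hIeq'
  have hIeqpos : 0 < Ieq := by
    rw [hIle] at hGe; linarith
  have hB0 : B0 = (x - Ilt) / Ieq := rfl
  have hB0pos : 0 < B0 := by
    rw [hB0]; exact div_pos (by linarith) hIeqpos
  have hB0lt1 : B0 < 1 := by
    rw [hB0, div_lt_one hIeqpos]
    rw [hIle] at hGe; linarith
  have hXhat : ∀ ω, Xhat ω = indlt ω + B0 * indeq ω := fun ω => rfl
  have hXm : Measurable Xhat := hmlt.add ((measurable_const).mul hmeq)
  have hX01 : ∀ ω, Xhat ω ∈ Set.Icc (0:ℝ) 1 := by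
    intro ω
    rcases lt_trichotomy (ahat * Hhat ω) (Ghat ω) with h | h | h
    · have : Xhat ω = 1 := by simp [hXhat, hindlt, hindeq, h, h.ne']
      rw [this]; exact ⟨zero_le_one, le_refl _⟩
    · have : Xhat ω = B0 := by simp [hXhat, hindlt, hindeq, h, lt_irrefl]
      rw [this]; exact ⟨le_of_lt hB0pos, le_of_lt hB0lt1⟩
    · have : Xhat ω = 0 := by
        simp [hXhat, hindlt, hindeq, not_lt.mpr (le_of_lt h), (ne_of_lt h)]
      rw [this]; exact ⟨le_refl _, zero_le_one⟩
  have hHXhat : ∫ ω, Hhat ω * Xhat ω ∂μ = x := by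
    have h1 : ∀ ω, Hhat ω * Xhat ω = Hhat ω * indlt ω + B0 * (Hhat ω * indeq ω) := by
      intro ω; rw [hXhat]; ring
    rw [integral_congr_ae (Filter.Eventually.of_forall h1),
      integral_add hHlt (hHeq.const_mul _), integral_const_mul]
    rw [hB0, div_mul_cancel₀ _ (ne_of_gt hIeqpos)]
    ring
  have hXhatT : Xhat ∈ QH.Tests μ {Hhat} x := by
    refine ⟨⟨hXm, hX01⟩, ?_⟩
    intro h hh
    rw [Set.mem_singleton_iff] at hh
    subst hh
    exact le_of_eq hHXhat
  -- Neyman–Pearson inequality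
  have hNP : ∀ X ∈ QH.Tests μ {Hhat} x,
      ∫ ω, Ghat ω * X ω ∂μ ≤ ∫ ω, Ghat ω * Xhat ω ∂μ := by
    rintro X ⟨⟨hXm', hX01'⟩, hXbud⟩
    have hbud : ∫ ω, Hhat ω * X ω ∂μ ≤ x := hXbud Hhat rfl
    have hGX : Integrable (fun ω => Ghat ω * X ω) μ :=
      integrable_mul_test' hGi hGm hXm' hX01'
    have hGXh : Integrable (fun ω => Ghat ω * Xhat ω) μ :=
      integrable_mul_test' hGi hGm hXm hX01
    have hHX : Integrable (fun ω => Hhat ω * X ω) μ :=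
      integrable_mul_test' hHi hHm hXm' hX01'
    have hHXh : Integrable (fun ω => Hhat ω * Xhat ω) μ :=
      integrable_mul_test' hHi hHm hXm hX01
    have hpt : ∀ ω, 0 ≤ (Ghat ω - ahat * Hhat ω) * (Xhat ω - X ω) := by
      intro ω
      rcases lt_trichotomy (ahat * Hhat ω) (Ghat ω) with h | h | h
      · have hX1 : Xhat ω = 1 := by simp [hXhat, hindlt, hindeq, h, h.ne']
        refine mul_nonneg (by linarith) ?_
        rw [hX1]; linarith [(hX01' ω).2]
      · rw [← h]; simp
      · have hX0 : Xhat ω = 0 := by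
          simp [hXhat, hindlt, hindeq, not_lt.mpr (le_of_lt h), (ne_of_lt h)]
        rw [hX0]
        have h2 : Ghat ω - ahat * Hhat ω ≤ 0 := by linarith
        have h3 : (0:ℝ) - X ω ≤ 0 := by linarith [(hX01' ω).1]
        nlinarith
    have h0 : 0 ≤ ∫ ω, (Ghat ω - ahat * Hhat ω) * (Xhat ω - X ω) ∂μ :=
      integral_nonneg hpt
    have hexp : ∫ ω, (Ghat ω - ahat * Hhat ω) * (Xhat ω - X ω) ∂μ
        = (∫ ω, Ghat ω * Xhat ω ∂μ) - (∫ ω, Ghat ω * X ω ∂μ)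
          - ahat * (∫ ω, Hhat ω * Xhat ω ∂μ) + ahat * (∫ ω, Hhat ω * X ω ∂μ) := by
      have h1 : ∀ ω, (Ghat ω - ahat * Hhat ω) * (Xhat ω - X ω)
          = Ghat ω * Xhat ω - Ghat ω * X ω - ahat * (Hhat ω * Xhat ω)
            + ahat * (Hhat ω * X ω) := by intro ω; ring
      have i1 : Integrable (fun ω => Ghat ω * Xhat ω - Ghat ω * X ω) μ := hGXh.sub hGX
      have i2 : Integrable
          (fun ω => Ghat ω * Xhat ω - Ghat ω * X ω - ahat * (Hhat ω * Xhat ω)) μ :=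
        i1.sub (hHXh.const_mul _)
      have i3 : Integrable (fun ω => ahat * (Hhat ω * X ω)) μ := hHX.const_mul _
      rw [integral_congr_ae (Filter.Eventually.of_forall h1),
        integral_add i2 i3, integral_sub i1 (hHXh.const_mul _), integral_sub hGXh hGX,
        integral_const_mul, integral_const_mul]
    rw [hexp, hHXhat] at h0
    nlinarith [mul_le_mul_of_nonneg_left hbud ha]
  have hpow : ∀ X : Ω → ℝ, QH.powerInf μ {Ghat} X = ∫ ω, Ghat ω * X ω ∂μ := by
    intro X
    unfold QH.powerInf
    rw [Set.image_singleton, csInf_singleton]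
  have hgr : IsGreatest (QH.powerInf μ {Ghat} '' QH.Tests μ {Hhat} x)
      (∫ ω, Ghat ω * Xhat ω ∂μ) := by
    constructor
    · exact ⟨Xhat, hXhatT, hpow Xhat⟩
    · rintro y ⟨X, hX, rfl⟩
      rw [hpow]
      exact hNP X hX
  exact ⟨hB0pos, hB0lt1, hHXhat, hXhatT, (hgr.csSup_eq).symm⟩
end

section
/- Suppose 𝒢 = {Ĝ} and ℋ = {Ĥ} are singletons of integrable nonnegative random variables, let x > 0, and suppose there exists an 𝓕-measurable random variable Y such that the function g(y) := 𝔼[Ĥ·1_{{Y < y}}] is continuous on ℝ. Then there exists a set A ∈ 𝓕 such that the pure test 1_A satisfies 𝔼[Ĥ·1_A] ≤ x and 𝔼[Ĝ·1_A] = V(x); consequently V₁(x) = V(x). -/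
open MeasureTheory

section Aux

open MeasureTheory Filter Set

variable {Ω : Type*} [MeasurableSpace Ω] {μ : MeasureTheory.Measure Ω}

lemma aux_mul_indicator (f : Ω → ℝ) (A : Set Ω) :
    (fun ω => f ω * A.indicator (fun _ => (1:ℝ)) ω) = A.indicator f := by
  funext ω
  by_cases h : ω ∈ A <;> simp [h]

lemma aux_int_mul {f X : Ω → ℝ} (hf : Integrable f μ) (hX : Measurable X)
    (hb : ∀ ω, X ω ∈ Set.Icc (0:ℝ) 1) :
    Integrable (fun ω => f ω * X ω) μ := by
  refine hf.norm.mono' (hf.aestronglyMeasurable.mul hX.aestronglyMeasurable) ?_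
  filter_upwards with ω
  rw [norm_mul]
  refine mul_le_of_le_one_right (norm_nonneg _) ?_
  rw [Real.norm_eq_abs, abs_of_nonneg (hb ω).1]
  exact (hb ω).2

lemma aux_conclude (μ : MeasureTheory.Measure Ω) (Ghat Hhat : Ω → ℝ) (x : ℝ)
    (A : Set Ω) (hA : MeasurableSet A)
    (hAH : ∫ ω, Hhat ω * Set.indicator A (fun _ => (1:ℝ)) ω ∂μ ≤ x)
    (hopt : ∀ X ∈ QH.Tests μ {Hhat} x, ∫ ω, Ghat ω * X ω ∂μ ≤
      ∫ ω, Ghat ω * Set.indicator A (fun _ => (1:ℝ)) ω ∂μ) :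
    (∫ ω, Hhat ω * Set.indicator A (fun _ => (1:ℝ)) ω ∂μ ≤ x) ∧
    (∫ ω, Ghat ω * Set.indicator A (fun _ => (1:ℝ)) ω ∂μ = QH.V μ {Ghat} {Hhat} x) ∧
    QH.V1 μ {Ghat} {Hhat} x = QH.V μ {Ghat} {Hhat} x := by
  set ind := A.indicator (fun _ => (1:ℝ)) with hind
  have hindRT : QH.IsRandTest ind := by
    refine ⟨measurable_const.indicator hA, fun ω => ?_⟩
    by_cases h : ω ∈ A <;> simp [hind, h]
  have hindT : ind ∈ QH.Tests μ {Hhat} x := by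
    refine ⟨hindRT, ?_⟩
    intro h hh
    rw [Set.mem_singleton_iff] at hh
    subst hh
    exact hAH
  have hpow : ∀ X : Ω → ℝ, QH.powerInf μ {Ghat} X = ∫ ω, Ghat ω * X ω ∂μ := by
    intro X; simp [QH.powerInf]
  have hVg : IsGreatest (QH.powerInf μ {Ghat} '' QH.Tests μ {Hhat} x)
      (∫ ω, Ghat ω * ind ω ∂μ) := by
    constructor
    · exact ⟨ind, hindT, hpow ind⟩
    · rintro v ⟨X, hX, rfl⟩
      rw [hpow]
      exact hopt X hX
  have hV : QH.V μ {Ghat} {Hhat} x = ∫ ω, Ghat ω * ind ω ∂μ := hVg.csSup_eq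
  have hindpure : ∀ ω, ind ω = 0 ∨ ind ω = 1 := by
    intro ω; by_cases h : ω ∈ A
    · right; simp [hind, h]
    · left; simp [hind, h]
  have hV1g : IsGreatest (QH.powerInf μ {Ghat} ''
      {X ∈ QH.Tests μ {Hhat} x | ∀ ω, X ω = 0 ∨ X ω = 1}) (∫ ω, Ghat ω * ind ω ∂μ) := by
    constructor
    · exact ⟨ind, ⟨hindT, hindpure⟩, hpow ind⟩
    · rintro v ⟨X, hX, rfl⟩
      rw [hpow]
      exact hopt X hX.1
  have hV1 : QH.V1 μ {Ghat} {Hhat} x = ∫ ω, Ghat ω * ind ω ∂μ := hV1g.csSup_eq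
  exact ⟨hAH, hV.symm, by rw [hV, hV1]⟩

end Aux

open MeasureTheory Filter Set Topology

/-- For singletons `𝒢 = {Ĝ}`, `ℋ = {Ĥ}` of integrable nonnegative random
variables and `x > 0`, if there is an `𝓕`-measurable `Y` such that
`y ↦ 𝔼[Ĥ·1_{Y < y}]` is continuous, then some pure test `1_A` satisfies the constraint
and attains `V(x)`; consequently `V₁(x) = V(x)`. -/
theorem stmt_10 {Ω : Type*} [MeasurableSpace Ω] (μ : MeasureTheory.Measure Ω)
    [MeasureTheory.IsProbabilityMeasure μ]
    (Ghat Hhat : Ω → ℝ)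
    (hGm : Measurable Ghat) (hGpos : ∀ ω, 0 ≤ Ghat ω) (hGi : MeasureTheory.Integrable Ghat μ)
    (hHm : Measurable Hhat) (hHpos : ∀ ω, 0 ≤ Hhat ω) (hHi : MeasureTheory.Integrable Hhat μ)
    (x : ℝ) (hx : 0 < x)
    (Y : Ω → ℝ) (hYm : Measurable Y)
    (hg : Continuous fun y : ℝ => ∫ ω, Hhat ω * (if Y ω < y then (1 : ℝ) else 0) ∂μ) :
    ∃ A : Set Ω, MeasurableSet A ∧
      (∫ ω, Hhat ω * Set.indicator A (fun _ => (1 : ℝ)) ω ∂μ ≤ x) ∧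
      (∫ ω, Ghat ω * Set.indicator A (fun _ => (1 : ℝ)) ω ∂μ = QH.V μ {Ghat} {Hhat} x) ∧
      QH.V1 μ {Ghat} {Hhat} x = QH.V μ {Ghat} {Hhat} x := by
  classical
  by_cases hHx : ∫ ω, Hhat ω ∂μ ≤ x
  · -- the trivial case: the constant test 1 is feasible
    have hAH : ∫ ω, Hhat ω * Set.indicator (Set.univ : Set Ω) (fun _ => (1:ℝ)) ω ∂μ ≤ x := by
      simpa using hHx
    have hopt : ∀ X ∈ QH.Tests μ {Hhat} x, ∫ ω, Ghat ω * X ω ∂μ ≤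
        ∫ ω, Ghat ω * Set.indicator (Set.univ : Set Ω) (fun _ => (1:ℝ)) ω ∂μ := by
      intro X hX
      obtain ⟨⟨hXm, hXb⟩, -⟩ := hX
      have h1 : Integrable (fun ω => Ghat ω * X ω) μ := aux_int_mul hGi hXm hXb
      have h2 : ∫ ω, Ghat ω * Set.indicator (Set.univ : Set Ω) (fun _ => (1:ℝ)) ω ∂μ
          = ∫ ω, Ghat ω ∂μ := by simp
      rw [h2]
      refine integral_mono h1 hGi fun ω => ?_
      have h3 := (hXb ω).2
      nlinarith [hGpos ω, (hXb ω).1]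
    exact ⟨Set.univ, MeasurableSet.univ, aux_conclude μ Ghat Hhat x _ MeasurableSet.univ hAH hopt⟩
  push_neg at hHx
  -- Neyman–Pearson construction
  set S : ℝ → Set Ω := fun a => {ω | a * Hhat ω < Ghat ω} with hS
  have mS : ∀ a, MeasurableSet (S a) := fun a => measurableSet_lt (hHm.const_mul a) hGm
  have Ssub : ∀ {a b : ℝ}, a ≤ b → S b ⊆ S a := by
    intro a b hab ω hω
    have hω' : b * Hhat ω < Ghat ω := hω
    exact lt_of_le_of_lt (mul_le_mul_of_nonneg_right hab (hHpos ω)) hω'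
  set φ : ℝ → ℝ := fun a => ∫ ω in S a, Hhat ω ∂μ with hφ
  have φmono : ∀ {a b : ℝ}, a ≤ b → φ b ≤ φ a := by
    intro a b hab
    exact setIntegral_mono_set hHi.integrableOn (ae_of_all _ hHpos)
      (HasSubset.Subset.eventuallyLE (Ssub hab))
  have hφ0 : Tendsto (fun n : ℕ => φ (n : ℝ)) atTop (𝓝 0) := by
    have hanti : Antitone fun n : ℕ => S (n : ℝ) := fun m n hmn => Ssub (by exact_mod_cast hmn)
    have htend := tendsto_setIntegral_of_antitone (μ := μ) (f := Hhat)
      (fun n : ℕ => mS _) hanti ⟨0, hHi.integrableOn⟩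
    have hz : ∫ ω in ⋂ n : ℕ, S (n:ℝ), Hhat ω ∂μ = 0 := by
      have heq : Set.EqOn Hhat (fun _ => (0:ℝ)) (⋂ n : ℕ, S (n:ℝ)) := by
        intro ω hω
        by_contra hne
        have hH' : 0 < Hhat ω := lt_of_le_of_ne (hHpos ω) (Ne.symm hne)
        obtain ⟨n, hn⟩ := exists_nat_gt (Ghat ω / Hhat ω)
        have hmem : ω ∈ S (n:ℝ) := Set.mem_iInter.mp hω n
        have hmem' : (n:ℝ) * Hhat ω < Ghat ω := hmem
        nlinarith [(div_lt_iff₀ hH').mp hn]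
      rw [setIntegral_congr_fun (MeasurableSet.iInter fun n => mS _) heq, integral_zero]
    rw [hz] at htend
    exact htend
  set T : Set ℝ := {a | 0 ≤ a ∧ φ a ≤ x} with hT
  have hTne : T.Nonempty := by
    obtain ⟨n, hn⟩ := (hφ0.eventually (eventually_lt_nhds hx)).exists
    exact ⟨(n:ℝ), Nat.cast_nonneg n, hn.le⟩
  have hTbdd : BddBelow T := ⟨0, fun a ha => ha.1⟩
  set a₀ : ℝ := sInf T with ha₀
  have ha₀0 : 0 ≤ a₀ := le_csInf hTne fun a ha => ha.1
  have hle : ∀ ε : ℝ, 0 < ε → φ (a₀ + ε) ≤ x := by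
    intro ε hε
    obtain ⟨t, htT, htlt⟩ := exists_lt_of_csInf_lt hTne (by linarith : sInf T < a₀ + ε)
    exact le_trans (φmono htlt.le) htT.2
  have hKey1 : φ a₀ ≤ x := by
    have hmono : Monotone fun n : ℕ => S (a₀ + 1/(n+1)) := by
      intro m n hmn
      have hmn' : (m:ℝ) + 1 ≤ (n:ℝ) + 1 := by
        have hc : (m:ℝ) ≤ (n:ℝ) := Nat.cast_le.2 hmn
        linarith
      exact Ssub (add_le_add_right (one_div_le_one_div_of_le (by positivity) hmn') a₀)
    have hU : (⋃ n : ℕ, S (a₀ + 1/(n+1))) = S a₀ := by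
      ext ω
      simp only [Set.mem_iUnion, hS, Set.mem_setOf_eq]
      constructor
      · rintro ⟨n, hn⟩
        have hεH : 0 ≤ (1/((n:ℝ)+1)) * Hhat ω := mul_nonneg (by positivity) (hHpos ω)
        nlinarith
      · intro hω
        rcases eq_or_lt_of_le (hHpos ω) with hH0 | hH'
        · refine ⟨0, ?_⟩
          rw [← hH0, mul_zero]
          rw [← hH0, mul_zero] at hω
          exact hω
        · obtain ⟨n, hn⟩ := exists_nat_one_div_lt
            (div_pos (sub_pos.2 hω) hH' : 0 < (Ghat ω - a₀*Hhat ω)/Hhat ω)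
          refine ⟨n, ?_⟩
          have h2 := (lt_div_iff₀ hH').mp hn
          nlinarith
    have htend := tendsto_setIntegral_of_monotone (μ:=μ) (f:=Hhat)
      (fun n : ℕ => mS _) hmono (hU ▸ hHi.integrableOn)
    rw [hU] at htend
    exact le_of_tendsto htend (Filter.Eventually.of_forall fun n => hle _ (by positivity))
  set Le : Set Ω := {ω | a₀ * Hhat ω ≤ Ghat ω} with hLe
  have mLe : MeasurableSet Le := measurableSet_le (hHm.const_mul a₀) hGm
  set ψ : ℝ := ∫ ω in Le, Hhat ω ∂μ with hψdef
  have hKey2 : x ≤ ψ := by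
    rcases eq_or_lt_of_le ha₀0 with h0 | h0
    · have hLeuniv : Le = Set.univ := by
        ext ω
        simp only [hLe, Set.mem_setOf_eq, Set.mem_univ, iff_true]
        rw [← h0, zero_mul]
        exact hGpos ω
      rw [hψdef, hLeuniv, Measure.restrict_univ]
      exact hHx.le
    · set aseq : ℕ → ℝ := fun n => a₀ - a₀ / (n+2) with haseq
      have haseq_lt : ∀ n, aseq n < a₀ := by
        intro n
        have hp : 0 < a₀ / ((n:ℝ)+2) := div_pos h0 (by positivity)
        simp only [haseq]
        linarith
      have haseq_nonneg : ∀ n, 0 ≤ aseq n := by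
        intro n
        have hc : (0:ℝ) ≤ (n:ℝ) := Nat.cast_nonneg n
        have hp : a₀ / ((n:ℝ)+2) ≤ a₀ := div_le_self h0.le (by linarith)
        simp only [haseq]
        linarith
      have haseq_mono : Monotone aseq := by
        intro m n hmn
        have hmn' : (m:ℝ) + 2 ≤ (n:ℝ) + 2 := by
          have hc : (m:ℝ) ≤ (n:ℝ) := Nat.cast_le.2 hmn
          linarith
        have hp : a₀ / ((n:ℝ)+2) ≤ a₀ / ((m:ℝ)+2) :=
          div_le_div_of_nonneg_left h0.le (by positivity) hmn' 
        simp only [haseq]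
        linarith
      have haseq_tend : Tendsto aseq atTop (𝓝 a₀) := by
        have h1 : Tendsto (fun n : ℕ => a₀ / ((n:ℝ)+2)) atTop (𝓝 0) :=
          Tendsto.div_atTop tendsto_const_nhds
            (tendsto_atTop_add_const_right _ 2 tendsto_natCast_atTop_atTop)
        have h2 : Tendsto (fun _ : ℕ => a₀) atTop (𝓝 a₀) := tendsto_const_nhds
        simpa [haseq] using h2.sub h1
      have hanti : Antitone fun n => S (aseq n) := fun m n hmn => Ssub (haseq_mono hmn)
      have hgt : ∀ n, x < φ (aseq n) := by
        intro n
        by_contra hc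
        push_neg at hc
        have hmem : aseq n ∈ T := ⟨haseq_nonneg n, hc⟩
        have := csInf_le hTbdd hmem
        exact absurd this (not_le.2 (haseq_lt n))
      have hind_eq : (⋂ n, S (aseq n)).indicator Hhat = Le.indicator Hhat := by
        funext ω
        by_cases hH0 : Hhat ω = 0
        · simp [Set.indicator_apply, hH0]
        · have hH' : 0 < Hhat ω := lt_of_le_of_ne (hHpos ω) (Ne.symm hH0)
          have hiff : (ω ∈ ⋂ n, S (aseq n)) ↔ ω ∈ Le := by
            simp only [Set.mem_iInter, hS, hLe, Set.mem_setOf_eq]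
            constructor
            · intro h
              exact le_of_tendsto (haseq_tend.mul_const (Hhat ω))
                (Filter.Eventually.of_forall fun n => (h n).le)
            · intro h n
              have : aseq n * Hhat ω < a₀ * Hhat ω :=
                mul_lt_mul_of_pos_right (haseq_lt n) hH'
              linarith
          simp [Set.indicator_apply, hiff]
      have htend := tendsto_setIntegral_of_antitone (μ:=μ) (f:=Hhat)
        (fun n => mS _) hanti ⟨0, hHi.integrableOn⟩
      have hint_eq : ∫ ω in ⋂ n, S (aseq n), Hhat ω ∂μ = ψ := by
        rw [hψdef, ← integral_indicator (MeasurableSet.iInter fun n => mS _),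
          ← integral_indicator mLe, hind_eq]
      rw [hint_eq] at htend
      exact ge_of_tendsto htend (Filter.Eventually.of_forall fun n => (hgt n).le)
  set E : Set Ω := {ω | a₀ * Hhat ω = Ghat ω} with hE
  have mE : MeasurableSet E := measurableSet_eq_fun (hHm.const_mul a₀) hGm
  set m0 : ℝ := ∫ ω in E, Hhat ω ∂μ with hm0
  have hdisjSE : Disjoint (S a₀) E := by
    rw [Set.disjoint_left]
    intro ω h1 h2
    have h1' : a₀ * Hhat ω < Ghat ω := h1
    have h2' : a₀ * Hhat ω = Ghat ω := h2
    exact absurd h2' (ne_of_lt h1')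
  have hsplit : ψ = φ a₀ + m0 := by
    have hsets : Le = S a₀ ∪ E := by
      ext ω
      simp only [hLe, hS, hE, Set.mem_setOf_eq, Set.mem_union]
      exact le_iff_lt_or_eq
    simp only [hψdef, hφ, hm0, hsets]
    exact setIntegral_union hdisjSE mE hHi.integrableOn hHi.integrableOn
  set t₀ : ℝ := x - φ a₀ with ht₀
  have ht₀0 : 0 ≤ t₀ := by rw [ht₀]; linarith
  have ht₀m : t₀ ≤ m0 := by rw [ht₀]; linarith
  obtain ⟨D, mD, hDE, hDt⟩ : ∃ D : Set Ω, MeasurableSet D ∧ D ⊆ E ∧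
      ∫ ω in D, Hhat ω ∂μ = t₀ := by
    rcases eq_or_lt_of_le ht₀0 with h1 | h1
    · refine ⟨∅, MeasurableSet.empty, Set.empty_subset _, ?_⟩
      rw [← h1]
      simp
    rcases eq_or_lt_of_le ht₀m with h2 | h2
    · exact ⟨E, mE, subset_rfl, by rw [← hm0, ← h2]⟩
    -- intermediate value construction
    have mYlt : ∀ y : ℝ, MeasurableSet {ω | Y ω < y} :=
      fun y => measurableSet_lt hYm measurable_const
    set g' : ℝ → ℝ := fun y => ∫ ω in {ω | Y ω < y}, Hhat ω ∂μ with hg'def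
    have heqg : ∀ y : ℝ, (∫ ω, Hhat ω * (if Y ω < y then (1:ℝ) else 0) ∂μ) = g' y := by
      intro y
      simp only [hg'def]
      rw [← integral_indicator (mYlt y)]
      congr 1
      funext ω
      by_cases hc : Y ω < y <;> simp [Set.indicator_apply, hc]
    have hg' : Continuous g' := by
      have hgg := hg
      simp only [heqg] at hgg
      exact hgg
    set h : ℝ → ℝ := fun y => ∫ ω in E ∩ {ω | Y ω < y}, Hhat ω ∂μ with hhdef
    have mEY : ∀ y, MeasurableSet (E ∩ {ω | Y ω < y}) := fun y => mE.inter (mYlt y)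
    have hmono_h : Monotone h := by
      intro y z hyz
      exact setIntegral_mono_set hHi.integrableOn (ae_of_all _ hHpos)
        (HasSubset.Subset.eventuallyLE (Set.inter_subset_inter_right _
          fun ω (hω : Y ω < y) => lt_of_lt_of_le hω hyz))
    have hg'mono : Monotone g' := by
      intro y z hyz
      exact setIntegral_mono_set hHi.integrableOn (ae_of_all _ hHpos)
        (HasSubset.Subset.eventuallyLE fun ω (hω : Y ω < y) => lt_of_lt_of_le hω hyz)
    have hdiffle : ∀ y z : ℝ, y ≤ z → h z - h y ≤ g' z - g' y := by
      intro y z hyz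
      have mB : MeasurableSet {ω | y ≤ Y ω ∧ Y ω < z} :=
        (measurableSet_le measurable_const hYm).inter (measurableSet_lt hYm measurable_const)
      have hsetsplit : {ω | Y ω < z} = {ω | Y ω < y} ∪ {ω | y ≤ Y ω ∧ Y ω < z} := by
        ext ω
        simp only [Set.mem_setOf_eq, Set.mem_union]
        constructor
        · intro hz
          rcases lt_or_ge (Y ω) y with hc | hc
          · exact Or.inl hc
          · exact Or.inr ⟨hc, hz⟩
        · rintro (hc | ⟨-, hc⟩)
          · exact lt_of_lt_of_le hc hyz
          · exact hc
      have hdisj1 : Disjoint {ω | Y ω < y} {ω | y ≤ Y ω ∧ Y ω < z} := by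
        rw [Set.disjoint_left]
        intro ω hω1 hω2
        exact absurd hω1 (not_lt.2 hω2.1)
      have hg'split : g' z = g' y + ∫ ω in {ω | y ≤ Y ω ∧ Y ω < z}, Hhat ω ∂μ := by
        simp only [hg'def]
        rw [hsetsplit, setIntegral_union hdisj1 mB hHi.integrableOn hHi.integrableOn]
      have hEsplit : E ∩ {ω | Y ω < z} = (E ∩ {ω | Y ω < y}) ∪ (E ∩ {ω | y ≤ Y ω ∧ Y ω < z}) := by
        rw [hsetsplit, Set.inter_union_distrib_left]
      have hdisj2 : Disjoint (E ∩ {ω | Y ω < y}) (E ∩ {ω | y ≤ Y ω ∧ Y ω < z}) :=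
        hdisj1.mono Set.inter_subset_right Set.inter_subset_right
      have hhsplit : h z = h y + ∫ ω in E ∩ {ω | y ≤ Y ω ∧ Y ω < z}, Hhat ω ∂μ := by
        simp only [hhdef]
        rw [hEsplit, setIntegral_union hdisj2 (mE.inter mB) hHi.integrableOn hHi.integrableOn]
      have hmon : ∫ ω in E ∩ {ω | y ≤ Y ω ∧ Y ω < z}, Hhat ω ∂μ ≤
          ∫ ω in {ω | y ≤ Y ω ∧ Y ω < z}, Hhat ω ∂μ :=
        setIntegral_mono_set hHi.integrableOn (ae_of_all _ hHpos)
          (HasSubset.Subset.eventuallyLE Set.inter_subset_right)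
      linarith
    have hcont : Continuous h := by
      rw [continuous_iff_continuousAt]
      intro y0
      rw [ContinuousAt, tendsto_iff_dist_tendsto_zero]
      refine squeeze_zero (fun y => dist_nonneg) (g := fun y => dist (g' y) (g' y0)) ?_ ?_
      · intro y
        simp only [Real.dist_eq]
        rcases le_total y y0 with hc | hc
        · rw [abs_sub_comm (h y), abs_sub_comm (g' y)]
          rw [abs_of_nonneg (sub_nonneg.2 (hmono_h hc)), abs_of_nonneg (sub_nonneg.2 (hg'mono hc))]
          linarith [hdiffle y y0 hc]
        · rw [abs_of_nonneg (sub_nonneg.2 (hmono_h hc)), abs_of_nonneg (sub_nonneg.2 (hg'mono hc))]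
          linarith [hdiffle y0 y hc]
      · exact tendsto_iff_dist_tendsto_zero.mp (hg'.tendsto y0)
    have hlim_top : Tendsto (fun n : ℕ => h (n:ℝ)) atTop (𝓝 m0) := by
      have hmono' : Monotone fun n : ℕ => E ∩ {ω | Y ω < (n:ℝ)} := by
        intro a b hab
        exact Set.inter_subset_inter_right _
          fun ω (hω : Y ω < (a:ℝ)) => lt_of_lt_of_le hω (by exact_mod_cast hab)
      have hU : (⋃ n : ℕ, E ∩ {ω | Y ω < (n:ℝ)}) = E := by
        ext ω
        simp only [Set.mem_iUnion, Set.mem_inter_iff, Set.mem_setOf_eq]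
        constructor
        · rintro ⟨n, hn, -⟩
          exact hn
        · intro hωE
          obtain ⟨n, hn⟩ := exists_nat_gt (Y ω)
          exact ⟨n, hωE, hn⟩
      have htend := tendsto_setIntegral_of_monotone (μ:=μ) (f:=Hhat)
        (fun n => mEY _) hmono' (hU ▸ hHi.integrableOn)
      rw [hU] at htend
      rw [hm0]
      exact htend
    have hlim_bot : Tendsto (fun n : ℕ => h (-(n:ℝ))) atTop (𝓝 0) := by
      have hanti' : Antitone fun n : ℕ => E ∩ {ω | Y ω < -(n:ℝ)} := by
        intro a b hab
        refine Set.inter_subset_inter_right _ fun ω (hω : Y ω < -(b:ℝ)) => ?_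
        have hba : -(b:ℝ) ≤ -(a:ℝ) := neg_le_neg (by exact_mod_cast hab)
        show Y ω < -(a:ℝ)
        linarith
      have hI : (⋂ n : ℕ, E ∩ {ω | Y ω < -(n:ℝ)}) = ∅ := by
        ext ω
        simp only [Set.mem_iInter, Set.mem_inter_iff, Set.mem_setOf_eq,
          Set.mem_empty_iff_false, iff_false, not_forall]
        obtain ⟨n, hn⟩ := exists_nat_gt (-(Y ω))
        refine ⟨n, fun hcon => ?_⟩
        linarith [hcon.2]
      have htend := tendsto_setIntegral_of_antitone (μ:=μ) (f:=Hhat)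
        (fun n => mEY _) hanti' ⟨0, hHi.integrableOn⟩
      rw [hI] at htend
      simpa using htend
    obtain ⟨n2, hn2⟩ := (hlim_top.eventually (eventually_gt_nhds h2)).exists
    obtain ⟨n1, hn1⟩ := (hlim_bot.eventually (eventually_lt_nhds h1)).exists
    have hy12 : -(n1:ℝ) ≤ (n2:ℝ) := by
      by_contra hc
      push_neg at hc
      have := hmono_h hc.le
      linarith
    obtain ⟨y, -, hy⟩ := intermediate_value_Icc hy12 hcont.continuousOn ⟨hn1.le, hn2.le⟩
    exact ⟨E ∩ {ω | Y ω < y}, mEY y, Set.inter_subset_left, hy⟩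
  set A : Set Ω := S a₀ ∪ D with hAdef
  have mA : MeasurableSet A := (mS _).union mD
  have hdisjSD : Disjoint (S a₀) D := hdisjSE.mono_right hDE
  have hAx : ∫ ω in A, Hhat ω ∂μ = x := by
    rw [hAdef, setIntegral_union hdisjSD mD hHi.integrableOn hHi.integrableOn, hDt]
    have hφa : ∫ ω in S a₀, Hhat ω ∂μ = φ a₀ := by rw [hφ]
    rw [hφa, ht₀]
    ring
  have hAH : ∫ ω, Hhat ω * Set.indicator A (fun _ => (1:ℝ)) ω ∂μ = x := by
    rw [aux_mul_indicator, integral_indicator mA]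
    exact hAx
  have hopt : ∀ X ∈ QH.Tests μ {Hhat} x, ∫ ω, Ghat ω * X ω ∂μ ≤
      ∫ ω, Ghat ω * Set.indicator A (fun _ => (1:ℝ)) ω ∂μ := by
    intro X hX
    obtain ⟨⟨hXm, hXb⟩, hXc⟩ := hX
    have hXH : ∫ ω, Hhat ω * X ω ∂μ ≤ x := hXc Hhat rfl
    set ind := A.indicator (fun _ => (1:ℝ)) with hindd
    have hindm : Measurable ind := measurable_const.indicator mA
    have hindb : ∀ ω, ind ω ∈ Set.Icc (0:ℝ) 1 := by
      intro ω
      by_cases hc : ω ∈ A <;> simp [hindd, hc]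
    have i1 : Integrable (fun ω => Ghat ω * ind ω) μ := aux_int_mul hGi hindm hindb
    have i2 : Integrable (fun ω => Ghat ω * X ω) μ := aux_int_mul hGi hXm hXb
    have i3 : Integrable (fun ω => Hhat ω * ind ω) μ := aux_int_mul hHi hindm hindb
    have i4 : Integrable (fun ω => Hhat ω * X ω) μ := aux_int_mul hHi hXm hXb
    have key : ∀ ω, 0 ≤ (Ghat ω - a₀ * Hhat ω) * (ind ω - X ω) := by
      intro ω
      rcases lt_trichotomy (a₀ * Hhat ω) (Ghat ω) with hlt | heq | hgt
      · have hmem : ω ∈ A := Set.mem_union_left _ hlt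
        have hi : ind ω = 1 := by simp [hindd, Set.indicator_of_mem hmem]
        have hb2 := (hXb ω).2
        nlinarith
      · have hzero : Ghat ω - a₀ * Hhat ω = 0 := by rw [← heq]; ring
        rw [hzero, zero_mul]
      · have hnA : ω ∉ A := by
          intro hmem
          rcases hmem with hc | hc
          · have hc' : a₀ * Hhat ω < Ghat ω := hc
            exact absurd hc' (not_lt.2 hgt.le)
          · have hc' : a₀ * Hhat ω = Ghat ω := hDE hc
            exact absurd hc' (ne_of_gt hgt)
        have hi : ind ω = 0 := by simp [hindd, Set.indicator_of_notMem hnA]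
        have hb1 := (hXb ω).1
        nlinarith
    have h0 : 0 ≤ ∫ ω, (Ghat ω - a₀ * Hhat ω) * (ind ω - X ω) ∂μ := integral_nonneg key
    have hexp : ∫ ω, (Ghat ω - a₀ * Hhat ω) * (ind ω - X ω) ∂μ
        = (∫ ω, Ghat ω * ind ω ∂μ) - (∫ ω, Ghat ω * X ω ∂μ)
          - a₀ * (∫ ω, Hhat ω * ind ω ∂μ) + a₀ * (∫ ω, Hhat ω * X ω ∂μ) := by
      have hfe : (fun ω => (Ghat ω - a₀ * Hhat ω) * (ind ω - X ω))
          = fun ω => (Ghat ω * ind ω - Ghat ω * X ω - a₀ * (Hhat ω * ind ω))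
            + a₀ * (Hhat ω * X ω) := by
        funext ω
        ring
      have eadd : ∫ ω, ((Ghat ω * ind ω - Ghat ω * X ω - a₀ * (Hhat ω * ind ω))
            + a₀ * (Hhat ω * X ω)) ∂μ
          = (∫ ω, (Ghat ω * ind ω - Ghat ω * X ω - a₀ * (Hhat ω * ind ω)) ∂μ)
            + ∫ ω, a₀ * (Hhat ω * X ω) ∂μ :=
        integral_add ((i1.sub i2).sub (i3.const_mul a₀)) (i4.const_mul a₀)
      have esub1 : ∫ ω, (Ghat ω * ind ω - Ghat ω * X ω - a₀ * (Hhat ω * ind ω)) ∂μ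
          = (∫ ω, (Ghat ω * ind ω - Ghat ω * X ω) ∂μ) - ∫ ω, a₀ * (Hhat ω * ind ω) ∂μ :=
        integral_sub (i1.sub i2) (i3.const_mul a₀)
      have esub2 : ∫ ω, (Ghat ω * ind ω - Ghat ω * X ω) ∂μ
          = (∫ ω, Ghat ω * ind ω ∂μ) - ∫ ω, Ghat ω * X ω ∂μ := integral_sub i1 i2
      have ec1 : ∫ ω, a₀ * (Hhat ω * ind ω) ∂μ = a₀ * ∫ ω, Hhat ω * ind ω ∂μ :=
        integral_const_mul _ _
      have ec2 : ∫ ω, a₀ * (Hhat ω * X ω) ∂μ = a₀ * ∫ ω, Hhat ω * X ω ∂μ :=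
        integral_const_mul _ _
      rw [hfe, eadd, esub1, esub2, ec1, ec2]
    have hHind : ∫ ω, Hhat ω * ind ω ∂μ = x := hAH
    rw [hexp, hHind] at h0
    nlinarith [mul_nonneg ha₀0 (sub_nonneg.2 hXH)]
  exact ⟨A, mA, aux_conclude μ Ghat Hhat x A mA hAH.le hopt⟩
end

section
/- Under Assumption (A1), let x > 0 and suppose there exists an 𝓕-measurable random variable Y that is independent of σ(𝒢 ∪ ℋ) (the smallest σ-algebra making every random variable in 𝒢 ∪ ℋ measurable) and whose cumulative distribution function y ↦ ℙ{Y < y} is continuous. Then there exists a set A ∈ 𝓕 such that the pure test 1_A belongs to 𝒳ₓ and inf_{G ∈ 𝒢} 𝔼[G·1_A] = V(x); consequently V₁(x) = V(x). -/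
open MeasureTheory

set_option linter.unusedSectionVars false
set_option maxHeartbeats 1600000

namespace NPAux

open MeasureTheory

variable {Ω : Type*} [MeasurableSpace Ω] {μ : MeasureTheory.Measure Ω}
  [MeasureTheory.IsProbabilityMeasure μ]

lemma unif (μ : Measure Ω) [IsProbabilityMeasure μ] (Y : Ω → ℝ) (hYm : Measurable Y)
    (hCdf : Continuous fun y : ℝ => (μ {ω | Y ω < y}).toReal)
    {t : ℝ} (ht0 : 0 ≤ t) (ht1 : t ≤ 1) :
    μ {ω | (μ {ω' | Y ω' < Y ω}).toReal < t} = ENNReal.ofReal t := by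
  set F : ℝ → ℝ := fun y => (μ {ω | Y ω < y}).toReal with hF
  have hFm : ∀ y, μ {ω | Y ω < y} = ENNReal.ofReal (F y) := fun y =>
    (ENNReal.ofReal_toReal (measure_ne_top _ _)).symm
  have hFnonneg : ∀ y, 0 ≤ F y := fun y => ENNReal.toReal_nonneg
  have hFmono : Monotone F := by
    intro a b hab
    exact ENNReal.toReal_mono (measure_ne_top _ _)
      (measure_mono (fun ω h => lt_of_lt_of_le h hab))
  set S : Set ℝ := {y | F y < t} with hS
  have hpre : {ω | (μ {ω' | Y ω' < Y ω}).toReal < t} = Y ⁻¹' S := rfl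
  rw [hpre]
  rcases eq_or_ne S ∅ with hSe | hSne
  · -- S empty: t = 0
    have ht : t = 0 := by
      rcases eq_or_lt_of_le ht0 with h | h
      · exact h.symm
      · exfalso
        -- find y with F y < t
        have htend : Filter.Tendsto (fun n : ℕ => μ {ω | Y ω < -(n : ℝ)})
            Filter.atTop (nhds (μ (⋂ n : ℕ, {ω | Y ω < -(n : ℝ)}))) := by
          refine tendsto_measure_iInter_atTop
            (fun n => (hYm measurableSet_Iio).nullMeasurableSet) ?_ ⟨0, measure_ne_top _ _⟩
          intro a b hab ω hω
          simp only [Set.mem_setOf_eq] at hω ⊢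
          have : (-(b:ℝ)) ≤ -(a:ℝ) := neg_le_neg (by exact_mod_cast hab)
          linarith
        have hempty : (⋂ n : ℕ, {ω | Y ω < -(n : ℝ)}) = ∅ := by
          ext ω
          simp only [Set.mem_iInter, Set.mem_setOf_eq, Set.mem_empty_iff_false, iff_false,
            not_forall, not_lt]
          obtain ⟨n, hn⟩ := exists_nat_ge (-(Y ω))
          exact ⟨n, by linarith⟩
        rw [hempty, measure_empty] at htend
        have : ∀ᶠ n : ℕ in Filter.atTop, μ {ω | Y ω < -(n : ℝ)} < ENNReal.ofReal t := by
          refine htend.eventually_lt_const ?_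
          simpa using h
        obtain ⟨n, hn⟩ := this.exists
        have : F (-(n : ℝ)) < t := by
          have := ENNReal.toReal_lt_toReal (measure_ne_top _ _) ENNReal.ofReal_ne_top |>.mpr hn
          rwa [ENNReal.toReal_ofReal ht0] at this
        exact (Set.eq_empty_iff_forall_notMem.1 hSe (-(n:ℝ))) this
    have : Y ⁻¹' S = ∅ := by rw [hSe]; simp
    simp [this, ht]
  · have hne : S.Nonempty := Set.nonempty_iff_ne_empty.2 hSne
    by_cases hbdd : BddAbove S
    · set s₀ := sSup S with hs0
      have hIio : Set.Iio s₀ ⊆ S := by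
        intro y hy
        obtain ⟨y', hy'S, hyy'⟩ := exists_lt_of_lt_csSup hne hy
        exact lt_of_le_of_lt (hFmono hyy'.le) hy'S
      have hIic : S ⊆ Set.Iic s₀ := fun y hy => le_csSup hbdd hy
      -- F s₀ = t
      have hFle : F s₀ ≤ t := by
        have htend : Filter.Tendsto (fun n : ℕ => F (s₀ - 1/(n+1))) Filter.atTop (nhds (F s₀)) := by
          refine (hCdf.tendsto s₀).comp ?_
          have : Filter.Tendsto (fun n : ℕ => s₀ - 1/(n+1)) Filter.atTop (nhds (s₀ - 0)) := by
            exact Filter.Tendsto.const_sub _ tendsto_one_div_add_atTop_nhds_zero_nat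
          simpa using this
        refine le_of_tendsto htend (Filter.Eventually.of_forall fun n => ?_)
        have : s₀ - 1/(n+1) ∈ Set.Iio s₀ := by
          simp only [Set.mem_Iio, sub_lt_self_iff]
          positivity
        exact (hIio this).le
      have hFge : t ≤ F s₀ := by
        by_contra hlt
        push_neg at hlt
        have hopen : IsOpen S := hCdf.isOpen_preimage (Set.Iio t) isOpen_Iio
        obtain ⟨ε, hε, hball⟩ := Metric.isOpen_iff.1 hopen s₀ hlt
        have : s₀ + ε/2 ∈ S := hball (by simp [Real.dist_eq, abs_of_nonneg, hε.le]; linarith)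
        have := le_csSup hbdd this
        linarith
      have hFs : F s₀ = t := le_antisymm hFle hFge
      -- μ {Y ≤ s₀} = ofReal (F s₀)
      have hub : μ (Y ⁻¹' S) ≤ ENNReal.ofReal t := by
        have hICap : (⋂ n : ℕ, {ω | Y ω < s₀ + 1/(n+1)}) = {ω | Y ω ≤ s₀} := by
          ext ω
          simp only [Set.mem_iInter, Set.mem_setOf_eq]
          constructor
          · intro h
            by_contra hc
            push_neg at hc
            obtain ⟨n, hn⟩ := exists_nat_one_div_lt (show (0:ℝ) < Y ω - s₀ by linarith)
            have := h n
            push_cast at this hn ⊢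
            linarith
          · intro h n
            have : (0:ℝ) < 1/(n+1) := by positivity
            linarith
        have htend : Filter.Tendsto (fun n : ℕ => μ {ω | Y ω < s₀ + 1/(n+1)})
            Filter.atTop (nhds (μ {ω | Y ω ≤ s₀})) := by
          rw [← hICap]
          refine tendsto_measure_iInter_atTop
            (fun n => (hYm measurableSet_Iio).nullMeasurableSet) ?_ ⟨0, measure_ne_top _ _⟩
          intro a b hab ω hω
          simp only [Set.mem_setOf_eq] at hω ⊢
          refine lt_of_lt_of_le hω ?_
          have : (1:ℝ)/(b+1) ≤ 1/(a+1) := by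
            apply one_div_le_one_div_of_le (by positivity)
            exact_mod_cast add_le_add_left (by exact_mod_cast hab) 1
          linarith
        have htend2 : Filter.Tendsto (fun n : ℕ => μ {ω | Y ω < s₀ + 1/(n+1)})
            Filter.atTop (nhds (ENNReal.ofReal (F s₀))) := by
          have h1 : Filter.Tendsto (fun n : ℕ => F (s₀ + 1/(n+1))) Filter.atTop (nhds (F s₀)) := by
            refine (hCdf.tendsto s₀).comp ?_
            have : Filter.Tendsto (fun n : ℕ => s₀ + 1/(n+1)) Filter.atTop (nhds (s₀ + 0)) :=
              Filter.Tendsto.const_add _ tendsto_one_div_add_atTop_nhds_zero_nat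
            simpa using this
          have h2 := (ENNReal.continuous_ofReal.tendsto (F s₀)).comp h1
          convert h2 using 2 with n
          exact hFm _
        have := tendsto_nhds_unique htend htend2
        rw [hFs] at this
        calc μ (Y ⁻¹' S) ≤ μ {ω | Y ω ≤ s₀} := measure_mono (fun ω hω => hIic hω)
          _ = ENNReal.ofReal t := this
      have hlb : ENNReal.ofReal t ≤ μ (Y ⁻¹' S) := by
        calc ENNReal.ofReal t = μ {ω | Y ω < s₀} := by rw [hFm s₀, hFs]
          _ ≤ μ (Y ⁻¹' S) := measure_mono (fun ω hω => hIio hω)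
      exact le_antisymm hub hlb
    · -- S unbounded above: S = univ and ofReal t = 1
      have hSuniv : S = Set.univ := by
        ext y
        simp only [Set.mem_univ, iff_true]
        obtain ⟨y', hy'S, hyy'⟩ := not_bddAbove_iff.1 hbdd y
        exact lt_of_le_of_lt (hFmono hyy'.le) hy'S
      have h1t : (1 : ENNReal) ≤ ENNReal.ofReal t := by
        have htend : Filter.Tendsto (fun n : ℕ => μ {ω | Y ω < (n : ℝ)})
            Filter.atTop (nhds (μ (⋃ n : ℕ, {ω | Y ω < (n : ℝ)}))) := by
          refine tendsto_measure_iUnion_atTop ?_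
          intro a b hab ω hω
          simp only [Set.mem_setOf_eq] at hω ⊢
          exact lt_of_lt_of_le hω (by exact_mod_cast hab)
        have huniv : (⋃ n : ℕ, {ω | Y ω < (n : ℝ)}) = Set.univ := by
          ext ω
          simp only [Set.mem_iUnion, Set.mem_setOf_eq, Set.mem_univ, iff_true]
          obtain ⟨n, hn⟩ := exists_nat_gt (Y ω)
          exact ⟨n, hn⟩
        rw [huniv, measure_univ] at htend
        refine le_of_tendsto htend (Filter.Eventually.of_forall fun n => ?_)
        rw [hFm]
        exact ENNReal.ofReal_le_ofReal (le_of_lt (show F (n:ℝ) < t from hSuniv ▸ Set.mem_univ (n:ℝ) |> fun _ => (by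
          have : (n:ℝ) ∈ S := hSuniv ▸ Set.mem_univ _
          exact this)))
      have h2t : ENNReal.ofReal t ≤ 1 := by
        calc ENNReal.ofReal t ≤ ENNReal.ofReal 1 := ENNReal.ofReal_le_ofReal ht1
          _ = 1 := by simp
      have : Y ⁻¹' S = Set.univ := by rw [hSuniv]; simp
      rw [this, measure_univ]
      exact le_antisymm h1t h2t


lemma mul_test_integrable {f X : Ω → ℝ} (hfm : Measurable f) (hfi : Integrable f μ)
    (hXm : Measurable X) (hX01 : ∀ ω, X ω ∈ Set.Icc (0:ℝ) 1) :
    Integrable (fun ω => f ω * X ω) μ := by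
  refine Integrable.mono' hfi.norm ((hfm.mul hXm).aestronglyMeasurable)
    (Filter.Eventually.of_forall fun ω => ?_)
  rw [norm_mul]
  calc ‖f ω‖ * ‖X ω‖ ≤ ‖f ω‖ * 1 := by
        refine mul_le_mul_of_nonneg_left ?_ (norm_nonneg _)
        rw [Real.norm_eq_abs, abs_of_nonneg (hX01 ω).1]
        exact (hX01 ω).2
    _ = ‖f ω‖ := mul_one _

lemma mul_test_nonneg {f X : Ω → ℝ} (hf0 : ∀ ω, 0 ≤ f ω) (hX01 : ∀ ω, X ω ∈ Set.Icc (0:ℝ) 1) :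
    0 ≤ ∫ ω, f ω * X ω ∂μ :=
  integral_nonneg fun ω => mul_nonneg (hf0 ω) (hX01 ω).1

lemma mul_test_le_self {f X : Ω → ℝ} (hfm : Measurable f) (hf0 : ∀ ω, 0 ≤ f ω)
    (hfi : Integrable f μ) (hXm : Measurable X) (hX01 : ∀ ω, X ω ∈ Set.Icc (0:ℝ) 1) :
    ∫ ω, f ω * X ω ∂μ ≤ ∫ ω, f ω ∂μ := by
  refine integral_mono (mul_test_integrable hfm hfi hXm hX01) hfi fun ω => ?_
  calc f ω * X ω ≤ f ω * 1 := mul_le_mul_of_nonneg_left (hX01 ω).2 (hf0 ω)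
    _ = f ω := mul_one _

/-- monotone truncation convergence -/
lemma trunc_tendsto {f X : Ω → ℝ} (hfm : Measurable f) (hf0 : ∀ ω, 0 ≤ f ω)
    (hfi : Integrable f μ) (hXm : Measurable X) (hX01 : ∀ ω, X ω ∈ Set.Icc (0:ℝ) 1) :
    Filter.Tendsto (fun n : ℕ => ∫ ω, min (f ω) n * X ω ∂μ) Filter.atTop
      (nhds (∫ ω, f ω * X ω ∂μ)) := by
  refine integral_tendsto_of_tendsto_of_monotone ?_
    (mul_test_integrable hfm hfi hXm hX01) ?_ ?_
  · intro n
    refine Integrable.mono' hfi.norm (((hfm.min measurable_const).mul hXm).aestronglyMeasurable)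
      (Filter.Eventually.of_forall fun ω => ?_)
    have h1 : 0 ≤ min (f ω) (n:ℝ) := le_min (hf0 ω) (by positivity)
    rw [norm_mul, Real.norm_eq_abs, Real.norm_eq_abs, abs_of_nonneg h1,
      abs_of_nonneg (hX01 ω).1]
    calc min (f ω) n * X ω ≤ f ω * 1 :=
          mul_le_mul (min_le_left _ _) (hX01 ω).2 (hX01 ω).1 (hf0 ω)
      _ = ‖f ω‖ := by rw [mul_one, Real.norm_eq_abs, abs_of_nonneg (hf0 ω)]
  · refine Filter.Eventually.of_forall fun ω => ?_
    intro a b hab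
    exact mul_le_mul_of_nonneg_right (min_le_min le_rfl (by exact_mod_cast hab)) (hX01 ω).1
  · refine Filter.Eventually.of_forall fun ω => ?_
    refine Filter.Tendsto.mul_const _ ?_
    refine tendsto_atTop_of_eventually_const (i₀ := ⌈f ω⌉₊) fun n hn => ?_
    exact min_eq_left ((Nat.le_ceil (f ω)).trans (by exact_mod_cast hn))

/-- difference control for truncation -/
lemma trunc_integral_ge {f X : Ω → ℝ} (hfm : Measurable f) (hf0 : ∀ ω, 0 ≤ f ω)
    (hfi : Integrable f μ) (hXm : Measurable X) (hX01 : ∀ ω, X ω ∈ Set.Icc (0:ℝ) 1) (n : ℕ) :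
    ∫ ω, f ω * X ω ∂μ - (∫ ω, f ω ∂μ - ∫ ω, min (f ω) n ∂μ) ≤ ∫ ω, min (f ω) n * X ω ∂μ := by
  have hminm : Measurable fun ω => min (f ω) (n:ℝ) := hfm.min measurable_const
  have hmini : Integrable (fun ω => min (f ω) (n:ℝ)) μ := by
    refine Integrable.mono' hfi.norm hminm.aestronglyMeasurable
      (Filter.Eventually.of_forall fun ω => ?_)
    rw [Real.norm_eq_abs, abs_of_nonneg (le_min (hf0 ω) (by positivity))]
    calc min (f ω) n ≤ f ω := min_le_left _ _
      _ ≤ ‖f ω‖ := le_abs_self _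
  have h1 : ∫ ω, f ω * X ω ∂μ - ∫ ω, min (f ω) n * X ω ∂μ
      ≤ ∫ ω, f ω ∂μ - ∫ ω, min (f ω) n ∂μ := by
    rw [← integral_sub (mul_test_integrable hfm hfi hXm hX01)
      (mul_test_integrable hminm hmini hXm hX01), ← integral_sub hfi hmini]
    refine integral_mono ((mul_test_integrable hfm hfi hXm hX01).sub
      (mul_test_integrable hminm hmini hXm hX01)) (hfi.sub hmini) fun ω => ?_
    have h2 : 0 ≤ f ω - min (f ω) n := by simp [min_le_left]
    calc f ω * X ω - min (f ω) n * X ω = (f ω - min (f ω) n) * X ω := by ring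
      _ ≤ (f ω - min (f ω) n) * 1 := mul_le_mul_of_nonneg_left (hX01 ω).2 h2
      _ = f ω - min (f ω) n := mul_one _
  linarith


/-- norm bound for the pairing -/
lemma pairing_norm_le {X : Ω → ℝ} (hXm : Measurable X) (hX01 : ∀ ω, X ω ∈ Set.Icc (0:ℝ) 1)
    (f : Lp ℝ 2 μ) : ‖∫ ω, f ω * X ω ∂μ‖ ≤ ‖f‖ := by
  have hfi : Integrable (f : Ω → ℝ) μ := (Lp.memLp f).integrable one_le_two
  have hfm : Measurable (f : Ω → ℝ) := (Lp.stronglyMeasurable f).measurable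
  calc ‖∫ ω, f ω * X ω ∂μ‖ ≤ ∫ ω, ‖f ω * X ω‖ ∂μ := norm_integral_le_integral_norm _
    _ ≤ ∫ ω, ‖f ω‖ ∂μ := by
        refine integral_mono (mul_test_integrable hfm hfi hXm hX01).norm hfi.norm fun ω => ?_
        rw [norm_mul]
        calc ‖f ω‖ * ‖X ω‖ ≤ ‖f ω‖ * 1 := by
              refine mul_le_mul_of_nonneg_left ?_ (norm_nonneg _)
              rw [Real.norm_eq_abs, abs_of_nonneg (hX01 ω).1]; exact (hX01 ω).2
          _ = ‖f ω‖ := mul_one _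
    _ = (eLpNorm (f : Ω → ℝ) 1 μ).toReal := by
        rw [integral_norm_eq_lintegral_enorm (Lp.aestronglyMeasurable f),
          eLpNorm_one_eq_lintegral_enorm]
    _ ≤ (eLpNorm (f : Ω → ℝ) 2 μ).toReal := by
        refine ENNReal.toReal_mono (Lp.memLp f).2.ne ?_
        exact eLpNorm_le_eLpNorm_of_exponent_le one_le_two (Lp.aestronglyMeasurable f)
    _ = ‖f‖ := (Lp.norm_def f).symm

/-- the pairing functional as an element of the weak dual of L². -/
noncomputable def pairing {X : Ω → ℝ} (hXm : Measurable X)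
    (hX01 : ∀ ω, X ω ∈ Set.Icc (0:ℝ) 1) : WeakDual ℝ (Lp ℝ 2 μ) :=
  StrongDual.toWeakDual <| LinearMap.mkContinuous
    { toFun := fun f => ∫ ω, f ω * X ω ∂μ
      map_add' := by
        intro f g
        have h1 : Integrable (fun ω => f ω * X ω) μ :=
          mul_test_integrable (Lp.stronglyMeasurable f).measurable
            ((Lp.memLp f).integrable one_le_two) hXm hX01
        have h2 : Integrable (fun ω => g ω * X ω) μ :=
          mul_test_integrable (Lp.stronglyMeasurable g).measurable
            ((Lp.memLp g).integrable one_le_two) hXm hX01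
        rw [← integral_add h1 h2]
        refine integral_congr_ae ?_
        filter_upwards [Lp.coeFn_add f g] with ω hω
        rw [hω]; simp [add_mul]
      map_smul' := by
        intro c f
        rw [RingHom.id_apply, ← integral_smul]
        refine integral_congr_ae ?_
        filter_upwards [Lp.coeFn_smul c f] with ω hω
        rw [hω]; simp [mul_assoc]
    } 1 (fun f => by rw [one_mul]; exact pairing_norm_le hXm hX01 f)

@[simp] lemma pairing_apply {X : Ω → ℝ} (hXm : Measurable X)
    (hX01 : ∀ ω, X ω ∈ Set.Icc (0:ℝ) 1) (f : Lp ℝ 2 μ) :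
    pairing hXm hX01 f = ∫ ω, f ω * X ω ∂μ := rfl


open Classical in
/-- truncation of a function, as an element of L². -/
noncomputable def truncLp (μ : Measure Ω) [IsProbabilityMeasure μ] (f : Ω → ℝ) (n : ℕ) :
    Lp ℝ 2 μ :=
  if h : MemLp (fun ω => min (f ω) n) 2 μ then h.toLp _ else 0

lemma truncLp_coeFn {f : Ω → ℝ} (hfm : Measurable f) (hf0 : ∀ ω, 0 ≤ f ω) (n : ℕ) :
    (truncLp μ f n : Ω → ℝ) =ᵐ[μ] fun ω => min (f ω) n := by
  have hmem : MemLp (fun ω => min (f ω) n) 2 μ := by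
    refine MemLp.of_bound ((hfm.min measurable_const).aestronglyMeasurable) n
      (Filter.Eventually.of_forall fun ω => ?_)
    rw [Real.norm_eq_abs, abs_of_nonneg (le_min (hf0 ω) (by positivity))]
    exact min_le_right _ _
  rw [truncLp]
  rw [dif_pos hmem]
  exact hmem.coeFn_toLp

theorem exists_optimal (μ : Measure Ω) [IsProbabilityMeasure μ] (G H : Set (Ω → ℝ))
    (hA1 : QH.A1 μ G H) (x : ℝ) (hx : 0 < x) (hGne : G.Nonempty) :
    ∃ Xh : Ω → ℝ, Xh ∈ QH.Tests μ H x ∧ QH.powerInf μ G Xh = QH.V μ G H x := by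
  classical
  obtain ⟨hGL, hHL, hInt, _hBdd, _, _⟩ := hA1
  obtain ⟨g₀, hg₀⟩ := hGne
  -- basic measurability/integrability facts
  have hGm : ∀ g ∈ G, Measurable g := fun g hg => (hGL hg).1
  have hG0 : ∀ g ∈ G, ∀ ω, 0 ≤ g ω := fun g hg => (hGL hg).2
  have hGi : ∀ g ∈ G, Integrable g μ := fun g hg => hInt g (Or.inl hg)
  have hHm : ∀ h ∈ H, Measurable h := fun h hh => (hHL hh).1
  have hH0 : ∀ h ∈ H, ∀ ω, 0 ≤ h ω := fun h hh => (hHL hh).2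
  have hHi : ∀ h ∈ H, Integrable h μ := fun h hh => hInt h (Or.inr hh)
  -- tests are nonempty
  have h0mem : (fun _ : Ω => (0:ℝ)) ∈ QH.Tests μ H x := by
    refine ⟨⟨measurable_const, fun ω => by simp⟩, fun h hh => ?_⟩
    simp [hx.le]
  have hVne : (QH.powerInf μ G '' QH.Tests μ H x).Nonempty :=
    ⟨_, Set.mem_image_of_mem _ h0mem⟩
  -- bounds for powerInf
  have hbb : ∀ X ∈ QH.Tests μ H x, BddBelow ((fun g => ∫ ω, g ω * X ω ∂μ) '' G) := by
    rintro X hX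
    refine ⟨0, ?_⟩
    rintro b ⟨g, hg, rfl⟩
    exact mul_test_nonneg (hG0 g hg) hX.1.2
  have hPle : ∀ X ∈ QH.Tests μ H x, QH.powerInf μ G X ≤ ∫ ω, g₀ ω * X ω ∂μ := fun X hX =>
    csInf_le (hbb X hX) ⟨g₀, hg₀, rfl⟩
  have hbdd : BddAbove (QH.powerInf μ G '' QH.Tests μ H x) := by
    refine ⟨∫ ω, g₀ ω ∂μ, ?_⟩
    rintro b ⟨X, hX, rfl⟩
    exact (hPle X hX).trans (mul_test_le_self (hGm g₀ hg₀) (hG0 g₀ hg₀) (hGi g₀ hg₀)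
      hX.1.1 hX.1.2)
  set V := QH.V μ G H x with hV
  -- the compact convex playground
  set C : Set (WeakDual ℝ (Lp ℝ 2 μ)) := WeakDual.polar ℝ (Metric.closedBall 0 1) with hC
  have hCcpt : IsCompact C := WeakDual.isCompact_polar ℝ (Metric.closedBall_mem_nhds _ one_pos)
  set Im : Set (WeakDual ℝ (Lp ℝ 2 μ)) :=
    {φ | ∃ X ∈ QH.Tests μ H x, ∀ f : Lp ℝ 2 μ, φ f = ∫ ω, f ω * X ω ∂μ} with hIm
  have hImC : Im ⊆ C := by
    rintro φ ⟨X, hX, hrep⟩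
    rw [hC, WeakDual.polar_def]
    intro f hf
    rw [hrep f]
    exact (pairing_norm_le hX.1.1 hX.1.2 f).trans (mem_closedBall_zero_iff.1 hf)
  set K : Set (WeakDual ℝ (Lp ℝ 2 μ)) := C ∩ closure Im with hK
  have hKcpt : IsCompact K := hCcpt.inter_right isClosed_closure
  have hKcl : IsClosed K := (WeakDual.isClosed_polar _ _).inter isClosed_closure
  -- the constraint sets
  set Q : ℕ → Set (WeakDual ℝ (Lp ℝ 2 μ)) := fun m =>
    K ∩ ⋂ g ∈ G, ⋂ n : ℕ,
      {φ | V - 1/(m+1) - (∫ ω, g ω ∂μ - ∫ ω, min (g ω) n ∂μ) ≤ φ (truncLp μ g n)} with hQ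
  have hQcl : ∀ m, IsClosed (Q m) := by
    intro m
    refine hKcl.inter (isClosed_biInter fun g hg => isClosed_iInter fun n => ?_)
    exact isClosed_le continuous_const (WeakDual.eval_continuous _)
  have hQanti : ∀ m, Q (m+1) ⊆ Q m := by
    intro m
    refine Set.inter_subset_inter le_rfl ?_
    refine Set.iInter₂_mono fun g hg => Set.iInter_mono fun n => ?_
    intro φ hφ
    simp only [Set.mem_setOf_eq] at hφ ⊢
    have h0 : (0:ℝ) < (m:ℝ)+1 := by positivity
    have h1 : (1:ℝ)/((m:ℝ)+1+1) ≤ 1/((m:ℝ)+1) :=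
      one_div_le_one_div_of_le h0 (by linarith)
    refine le_trans ?_ hφ
    push_cast
    push_cast at h1
    linarith
  have hQne : ∀ m, (Q m).Nonempty := by
    intro m
    have hlt : V - 1/(m+1) < V := by
      have : (0:ℝ) < 1/(m+1) := by positivity
      linarith
    obtain ⟨v, hvmem, hvgt⟩ := exists_lt_of_lt_csSup hVne hlt
    obtain ⟨X, hX, rfl⟩ := hvmem
    refine ⟨pairing hX.1.1 hX.1.2, ⟨hImC ⟨X, hX, fun f => pairing_apply _ _ f⟩,
      subset_closure ⟨X, hX, fun f => pairing_apply _ _ f⟩⟩, ?_⟩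
    simp only [Set.mem_iInter, Set.mem_setOf_eq]
    intro g hg n
    have hcoe : pairing (μ := μ) hX.1.1 hX.1.2 (truncLp μ g n) = ∫ ω, min (g ω) n * X ω ∂μ := by
      rw [pairing_apply]
      refine integral_congr_ae ?_
      filter_upwards [truncLp_coeFn (hGm g hg) (hG0 g hg) n] with ω hω
      rw [hω]
    rw [hcoe]
    have h1 := trunc_integral_ge (hGm g hg) (hG0 g hg) (hGi g hg) hX.1.1 hX.1.2 n
    have h2 : QH.powerInf μ G X ≤ ∫ ω, g ω * X ω ∂μ := csInf_le (hbb X hX) ⟨g, hg, rfl⟩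
    have h3 : V - 1/(m+1) ≤ QH.powerInf μ G X := hvgt.le
    linarith
  -- extract a point in the intersection
  have hQ0cpt : IsCompact (Q 0) := hKcpt.of_isClosed_subset (hQcl 0) Set.inter_subset_left
  obtain ⟨φ₀, hφ₀⟩ := IsCompact.nonempty_iInter_of_sequence_nonempty_isCompact_isClosed
    Q hQanti hQne hQ0cpt hQcl
  have hφ₀K : φ₀ ∈ K := (Set.mem_iInter.1 hφ₀ 0).1
  have hφ₀cl : φ₀ ∈ closure Im := hφ₀K.2
  -- closed conditions transfer
  have hclosed_cond : ∀ (s : Set (WeakDual ℝ (Lp ℝ 2 μ))), IsClosed s → Im ⊆ s → φ₀ ∈ s :=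
    fun s hs hsub => closure_minimal hsub hs hφ₀cl
  -- Riesz representation of φ₀
  obtain ⟨gL, hgL⟩ := (InnerProductSpace.toDual ℝ (Lp ℝ 2 μ)).surjective (WeakDual.toStrongDual φ₀)
  have hgLm : Measurable (gL : Ω → ℝ) := (Lp.stronglyMeasurable gL).measurable
  have hgLi : Integrable (gL : Ω → ℝ) μ := (Lp.memLp gL).integrable one_le_two
  have hrep : ∀ f : Lp ℝ 2 μ, φ₀ f = ∫ ω, gL ω * f ω ∂μ := by
    intro f
    have h1 : (InnerProductSpace.toDual ℝ (Lp ℝ 2 μ) gL) f = φ₀ f := by rw [hgL]; rfl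
    rw [InnerProductSpace.toDual_apply_apply] at h1
    rw [← h1, L2.inner_def]
    refine integral_congr_ae (Filter.Eventually.of_forall fun ω => ?_)
    simp [RCLike.inner_apply, starRingEnd_apply, mul_comm]
  -- indicator bounds
  have hind : ∀ (s : Set Ω) (hs : MeasurableSet s),
      0 ≤ φ₀ (indicatorConstLp 2 hs (measure_ne_top μ s) (1:ℝ)) ∧
      φ₀ (indicatorConstLp 2 hs (measure_ne_top μ s) (1:ℝ)) ≤ (μ s).toReal := by
    intro s hs
    set iA := indicatorConstLp 2 hs (measure_ne_top μ s) (1:ℝ) with hiA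
    have hclosed : IsClosed {φ : WeakDual ℝ (Lp ℝ 2 μ) | 0 ≤ φ iA ∧ φ iA ≤ (μ s).toReal} := by
      exact (isClosed_le continuous_const (WeakDual.eval_continuous _)).inter
        (isClosed_le (WeakDual.eval_continuous _) continuous_const)
    refine hclosed_cond _ hclosed ?_
    rintro φ ⟨X, hX, hrepX⟩
    have hcongr : (fun ω => (iA : Ω → ℝ) ω * X ω)
        =ᵐ[μ] fun ω => s.indicator (fun _ => (1:ℝ)) ω * X ω := by
      filter_upwards [indicatorConstLp_coeFn (p := 2) (μ := μ) (hs := hs)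
        (hμs := measure_ne_top μ s) (c := (1:ℝ))] with ω hω
      rw [hω]
    have hindm : Measurable (s.indicator fun _ : Ω => (1:ℝ)) := measurable_const.indicator hs
    have hind0 : ∀ ω, 0 ≤ s.indicator (fun _ : Ω => (1:ℝ)) ω := fun ω =>
      Set.indicator_nonneg (fun _ _ => zero_le_one) ω
    have hindi : Integrable (s.indicator fun _ : Ω => (1:ℝ)) μ := (integrable_const 1).indicator hs
    constructor
    · rw [hrepX iA, integral_congr_ae hcongr]
      exact integral_nonneg fun ω => mul_nonneg (hind0 ω) (hX.1.2 ω).1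
    · rw [hrepX iA, integral_congr_ae hcongr]
      calc ∫ ω, s.indicator (fun _ => (1:ℝ)) ω * X ω ∂μ
          ≤ ∫ ω, s.indicator (fun _ : Ω => (1:ℝ)) ω ∂μ :=
            mul_test_le_self hindm hind0 hindi hX.1.1 hX.1.2
        _ = (μ s).toReal := by rw [integral_indicator_const _ hs]; simp [Measure.real]
  -- set integrals of gL
  have hset : ∀ (s : Set Ω) (hs : MeasurableSet s),
      ∫ ω in s, gL ω ∂μ = φ₀ (indicatorConstLp 2 hs (measure_ne_top μ s) (1:ℝ)) := by
    intro s hs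
    rw [hrep, ← integral_indicator hs]
    refine integral_congr_ae ?_
    filter_upwards [indicatorConstLp_coeFn (p := 2) (μ := μ) (hs := hs)
      (hμs := measure_ne_top μ s) (c := (1:ℝ))] with ω hω
    rw [hω]
    by_cases hωs : ω ∈ s <;>
      simp [hωs, Set.indicator_of_mem, Set.indicator_of_notMem]
  have h0le : 0 ≤ᵐ[μ] (gL : Ω → ℝ) := by
    refine ae_nonneg_of_forall_setIntegral_nonneg hgLi fun s hs _ => ?_
    rw [hset s hs]; exact (hind s hs).1
  have hle1 : ∀ᵐ ω ∂μ, (gL : Ω → ℝ) ω ≤ 1 := by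
    have hsub : 0 ≤ᵐ[μ] fun ω => 1 - (gL : Ω → ℝ) ω := by
      refine ae_nonneg_of_forall_setIntegral_nonneg ((integrable_const (1:ℝ)).sub hgLi)
        fun s hs _ => ?_
      rw [integral_sub (integrable_const (1:ℝ)).integrableOn hgLi.integrableOn,
        setIntegral_const, hset s hs]
      simp only [smul_eq_mul, mul_one, sub_nonneg]
      exact (hind s hs).2
    filter_upwards [hsub] with ω hω
    simp only [Pi.zero_apply] at hω
    linarith
  -- the optimal test
  set Xh : Ω → ℝ := fun ω => max 0 (min (gL ω) 1) with hXh
  have hXhm : Measurable Xh :=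
    measurable_const.max (hgLm.min measurable_const)
  have hXh01 : ∀ ω, Xh ω ∈ Set.Icc (0:ℝ) 1 := fun ω =>
    ⟨le_max_left _ _, max_le zero_le_one (min_le_right _ _)⟩
  have hXhae : Xh =ᵐ[μ] (gL : Ω → ℝ) := by
    filter_upwards [h0le, hle1] with ω h0 h1
    simp only [Pi.zero_apply] at h0
    rw [hXh]
    simp only
    rw [min_eq_left h1, max_eq_right h0]
  have hrep' : ∀ f : Lp ℝ 2 μ, φ₀ f = ∫ ω, f ω * Xh ω ∂μ := by
    intro f
    rw [hrep f]
    refine integral_congr_ae ?_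
    filter_upwards [hXhae] with ω hω
    rw [hω, mul_comm]
  -- integral over truncations via φ₀
  have htruncXh : ∀ (f : Ω → ℝ), Measurable f → (∀ ω, 0 ≤ f ω) → ∀ n : ℕ,
      ∫ ω, min (f ω) n * Xh ω ∂μ = φ₀ (truncLp μ f n) := by
    intro f hfm hf0 n
    rw [hrep' (truncLp μ f n)]
    refine (integral_congr_ae ?_).symm
    filter_upwards [truncLp_coeFn hfm hf0 n] with ω hω
    rw [hω]
  have htrunci : ∀ (f : Ω → ℝ), Measurable f → (∀ ω, 0 ≤ f ω) → Integrable f μ → ∀ n : ℕ,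
      Integrable (fun ω => min (f ω) n) μ := by
    intro f hfm hf0 hfi n
    refine Integrable.mono' hfi.norm ((hfm.min measurable_const).aestronglyMeasurable)
      (Filter.Eventually.of_forall fun ω => ?_)
    rw [Real.norm_eq_abs, abs_of_nonneg (le_min (hf0 ω) (by positivity))]
    calc min (f ω) n ≤ f ω := min_le_left _ _
      _ ≤ ‖f ω‖ := le_abs_self _
  -- feasibility
  have hfeas : ∀ h ∈ H, ∫ ω, h ω * Xh ω ∂μ ≤ x := by
    intro h hh
    have hcond : ∀ n : ℕ, φ₀ (truncLp μ h n) ≤ x := by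
      intro n
      refine hclosed_cond {φ | φ (truncLp μ h n) ≤ x}
        (isClosed_le (WeakDual.eval_continuous _) continuous_const) ?_
      rintro φ ⟨X, hX, hrepX⟩
      simp only [Set.mem_setOf_eq]
      rw [hrepX]
      have heq : ∫ ω, (truncLp μ h n : Ω → ℝ) ω * X ω ∂μ = ∫ ω, min (h ω) n * X ω ∂μ := by
        refine integral_congr_ae ?_
        filter_upwards [truncLp_coeFn (hHm h hh) (hH0 h hh) n] with ω hω
        rw [hω]
      rw [heq]
      calc ∫ ω, min (h ω) n * X ω ∂μ ≤ ∫ ω, h ω * X ω ∂μ := by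
            refine integral_mono
              (mul_test_integrable (hHm h hh |>.min measurable_const)
                (htrunci h (hHm h hh) (hH0 h hh) (hHi h hh) n) hX.1.1 hX.1.2)
              (mul_test_integrable (hHm h hh) (hHi h hh) hX.1.1 hX.1.2) fun ω => ?_
            exact mul_le_mul_of_nonneg_right (min_le_left _ _) (hX.1.2 ω).1
        _ ≤ x := hX.2 h hh
    have htend := trunc_tendsto (hHm h hh) (hH0 h hh) (hHi h hh) hXhm hXh01
    refine le_of_tendsto htend (Filter.Eventually.of_forall fun n => ?_)
    rw [htruncXh h (hHm h hh) (hH0 h hh) n]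
    exact hcond n
  have hXtests : Xh ∈ QH.Tests μ H x := ⟨⟨hXhm, hXh01⟩, hfeas⟩
  -- optimality
  have hopt : ∀ g ∈ G, V ≤ ∫ ω, g ω * Xh ω ∂μ := by
    intro g hg
    have hcond : ∀ n : ℕ,
        V - (∫ ω, g ω ∂μ - ∫ ω, min (g ω) n ∂μ) ≤ φ₀ (truncLp μ g n) := by
      intro n
      have hm : ∀ m : ℕ, V - 1/(m+1) - (∫ ω, g ω ∂μ - ∫ ω, min (g ω) n ∂μ)
          ≤ φ₀ (truncLp μ g n) := by
        intro m
        have h2 := (Set.mem_iInter.1 hφ₀ m).2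
        have h3 := Set.mem_iInter.1 (Set.mem_iInter₂.1 h2 g hg) n
        exact h3
      have htm : Filter.Tendsto
          (fun m : ℕ => V - 1/(m+1) - (∫ ω, g ω ∂μ - ∫ ω, min (g ω) n ∂μ)) Filter.atTop
          (nhds (V - 0 - (∫ ω, g ω ∂μ - ∫ ω, min (g ω) n ∂μ))) := by
        refine Filter.Tendsto.sub_const ?_ _
        exact (tendsto_const_nhds).sub tendsto_one_div_add_atTop_nhds_zero_nat
      rw [show V - 0 - (∫ ω, g ω ∂μ - ∫ ω, min (g ω) n ∂μ)
        = V - (∫ ω, g ω ∂μ - ∫ ω, min (g ω) n ∂μ) by ring] at htm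
      exact le_of_tendsto htm (Filter.Eventually.of_forall hm)
    have hεt : Filter.Tendsto (fun n : ℕ => ∫ ω, g ω ∂μ - ∫ ω, min (g ω) n ∂μ)
        Filter.atTop (nhds 0) := by
      have h1 := trunc_tendsto (hGm g hg) (hG0 g hg) (hGi g hg)
        (measurable_const : Measurable fun _ : Ω => (1:ℝ))
        (fun ω => by norm_num : ∀ ω : Ω, (1:ℝ) ∈ Set.Icc (0:ℝ) 1)
      simp only [mul_one] at h1
      have h2 := (tendsto_const_nhds (x := ∫ ω, g ω ∂μ)).sub h1
      simpa using h2
    have hkey : ∀ n : ℕ, V - ∫ ω, g ω * Xh ω ∂μ ≤ ∫ ω, g ω ∂μ - ∫ ω, min (g ω) n ∂μ := by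
      intro n
      have h1 := hcond n
      rw [← htruncXh g (hGm g hg) (hG0 g hg) n] at h1
      have h2 : ∫ ω, min (g ω) n * Xh ω ∂μ ≤ ∫ ω, g ω * Xh ω ∂μ := by
        refine integral_mono
          (mul_test_integrable (hGm g hg |>.min measurable_const)
            (htrunci g (hGm g hg) (hG0 g hg) (hGi g hg) n) hXhm hXh01)
          (mul_test_integrable (hGm g hg) (hGi g hg) hXhm hXh01) fun ω => ?_
        exact mul_le_mul_of_nonneg_right (min_le_left _ _) (hXh01 ω).1
      linarith
    have hfin : V - ∫ ω, g ω * Xh ω ∂μ ≤ 0 :=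
      ge_of_tendsto hεt (Filter.Eventually.of_forall hkey)
    linarith
  have hge : V ≤ QH.powerInf μ G Xh := by
    refine le_csInf ⟨_, ⟨g₀, hg₀, rfl⟩⟩ ?_
    rintro b ⟨g, hg, rfl⟩
    exact hopt g hg
  have hle : QH.powerInf μ G Xh ≤ V := le_csSup hbdd ⟨Xh, hXtests, rfl⟩
  exact ⟨Xh, hXtests, le_antisymm hle hge⟩


lemma indep_mono {m₁ m₂ m₁' m₂' : MeasurableSpace Ω} {mΩ : MeasurableSpace Ω} {μ : Measure Ω}
    (h : ProbabilityTheory.Indep m₁ m₂ μ) (h1 : m₁' ≤ m₁) (h2 : m₂' ≤ m₂) :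
    ProbabilityTheory.Indep m₁' m₂' μ := by
  rw [ProbabilityTheory.Indep_iff] at h ⊢
  exact fun t1 t2 ht1 ht2 => h t1 t2 (h1 _ ht1) (h2 _ ht2)

/-- Purification of a randomized test using an independent uniformizable variable. -/
theorem purify (μ : Measure Ω) [IsProbabilityMeasure μ] (G H : Set (Ω → ℝ))
    (hA1 : QH.A1 μ G H) {X : Ω → ℝ} (hXm : Measurable X)
    (hX01 : ∀ ω, X ω ∈ Set.Icc (0:ℝ) 1)
    (Y : Ω → ℝ) (hYm : Measurable Y)
    (hInd : ProbabilityTheory.Indep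
      (MeasurableSpace.comap Y inferInstance) (QH.sigmaGen G H) μ)
    (hCdf : Continuous fun y : ℝ => (μ {ω | Y ω < y}).toReal) :
    ∃ A : Set Ω, MeasurableSet A ∧ ∀ f ∈ G ∪ H,
      ∫ ω, f ω * (A.indicator (fun _ => (1:ℝ))) ω ∂μ = ∫ ω, f ω * X ω ∂μ := by
  classical
  obtain ⟨hGL, hHL, hInt, _hBdd, _, _⟩ := hA1
  have hm : QH.sigmaGen G H ≤ (inferInstance : MeasurableSpace Ω) := by
    rw [QH.sigmaGen]
    refine iSup₂_le fun f hf => ?_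
    have : Measurable f := by
      rcases hf with hf | hf
      · exact (hGL hf).1
      · exact (hHL hf).1
    exact measurable_iff_comap_le.1 this
  have hcomap_le : ∀ f ∈ G ∪ H, MeasurableSpace.comap f inferInstance ≤ QH.sigmaGen G H := by
    intro f hf
    rw [QH.sigmaGen]
    exact le_iSup₂ (f := fun (g : Ω → ℝ) (_ : g ∈ G ∪ H) =>
      MeasurableSpace.comap g inferInstance) f hf
  haveI : IsFiniteMeasure (μ.trim hm) := isFiniteMeasure_trim hm
  haveI : SigmaFinite (μ.trim hm) := inferInstance
  -- conditional expectation and its clamp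
  set Xc : Ω → ℝ := μ[X | QH.sigmaGen G H] with hXc
  set Z : Ω → ℝ := fun ω => max 0 (min (Xc ω) 1) with hZ
  have hXcmm : Measurable[QH.sigmaGen G H] Xc := stronglyMeasurable_condExp.measurable
  have hZmm : Measurable[QH.sigmaGen G H] Z :=
    Measurable.max measurable_const (Measurable.min hXcmm measurable_const)
  have hZm : Measurable Z := hZmm.mono hm le_rfl
  have hXi : Integrable X μ := by
    refine Integrable.mono' (integrable_const 1) hXm.aestronglyMeasurable
      (Filter.Eventually.of_forall fun ω => ?_)
    rw [Real.norm_eq_abs, abs_of_nonneg (hX01 ω).1]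
    exact (hX01 ω).2
  have hZae : Z =ᵐ[μ] Xc := by
    have h0 : 0 ≤ᵐ[μ] Xc :=
      condExp_nonneg (Filter.Eventually.of_forall fun ω => (hX01 ω).1)
    have h1 : Xc ≤ᵐ[μ] fun _ => 1 := by
      have := condExp_mono (μ := μ) (m := QH.sigmaGen G H) hXi (integrable_const 1)
        (Filter.Eventually.of_forall fun ω => (hX01 ω).2)
      rwa [condExp_const hm] at this
    filter_upwards [h0, h1] with ω h0ω h1ω
    simp only [Pi.zero_apply] at h0ω
    rw [hZ]
    simp only
    rw [min_eq_left h1ω, max_eq_right h0ω]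
  have hZ01 : ∀ ω, Z ω ∈ Set.Icc (0:ℝ) 1 := fun ω =>
    ⟨le_max_left _ _, max_le zero_le_one (min_le_right _ _)⟩
  -- uniform variable and the pure test
  set F : ℝ → ℝ := fun y => (μ {ω | Y ω < y}).toReal with hF
  have hFm : Measurable F := hCdf.measurable
  set U : Ω → ℝ := fun ω => F (Y ω) with hU
  have hUm : Measurable U := hFm.comp hYm
  set A : Set Ω := {ω | U ω < Z ω} with hA
  have hAm : MeasurableSet A := measurableSet_lt hUm hZm
  refine ⟨A, hAm, ?_⟩
  intro f hf
  have hfm : Measurable f := by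
    rcases hf with hf' | hf'
    · exact (hGL hf').1
    · exact (hHL hf').1
  have hfi : Integrable f μ := hInt f hf
  have hfmm : Measurable[QH.sigmaGen G H] f := measurable_iff_comap_le.2 (hcomap_le f hf)
  -- the joint law is a product law
  set W : Ω → ℝ × ℝ := fun ω => (f ω, Z ω) with hW
  have hWmm : Measurable[QH.sigmaGen G H] W := Measurable.prodMk hfmm hZmm
  have hWm : Measurable W := hWmm.mono hm le_rfl
  have hIndepWU : ProbabilityTheory.IndepFun W U μ := by
    rw [ProbabilityTheory.IndepFun_iff_Indep]
    refine indep_mono hInd.symm ?_ ?_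
    · exact measurable_iff_comap_le.1 hWmm
    · have hcc : MeasurableSpace.comap U inferInstance
          = MeasurableSpace.comap Y (MeasurableSpace.comap F inferInstance) := by
        rw [hU, show (fun ω => F (Y ω)) = F ∘ Y from rfl, ← MeasurableSpace.comap_comp]
      rw [hcc]
      exact MeasurableSpace.comap_mono (measurable_iff_comap_le.1 hFm)
  have hmap : μ.map (fun ω => (W ω, U ω)) = (μ.map W).prod (μ.map U) :=
    (ProbabilityTheory.indepFun_iff_map_prod_eq_prod_map_map hWm.aemeasurable
      hUm.aemeasurable).1 hIndepWU
  haveI : IsProbabilityMeasure (μ.map U) := Measure.isProbabilityMeasure_map hUm.aemeasurable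
  haveI : IsProbabilityMeasure (μ.map W) := Measure.isProbabilityMeasure_map hWm.aemeasurable
  -- the kernel function
  set ψ : (ℝ × ℝ) × ℝ → ℝ := fun q => if q.2 < q.1.2 then q.1.1 else 0 with hψ
  have hψm : Measurable ψ := by
    refine Measurable.ite ?_ (measurable_fst.fst) measurable_const
    exact measurableSet_lt measurable_snd (measurable_fst.snd)
  have hWUm : Measurable fun ω => (W ω, U ω) := hWm.prodMk hUm
  -- step 1: rewrite as an integral over the joint law
  have step1 : ∫ ω, f ω * (A.indicator (fun _ => (1:ℝ))) ω ∂μ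
      = ∫ q, ψ q ∂(μ.map (fun ω => (W ω, U ω))) := by
    rw [integral_map hWUm.aemeasurable hψm.aestronglyMeasurable]
    refine integral_congr_ae (Filter.Eventually.of_forall fun ω => ?_)
    by_cases hω : U ω < Z ω
    · have hmem : ω ∈ A := hω
      simp only [hψ, hW]
      rw [if_pos hω, Set.indicator_of_mem hmem]
      ring
    · have hmem : ω ∉ A := hω
      simp only [hψ, hW]
      rw [if_neg hω, Set.indicator_of_notMem hmem]
      ring
  -- integrability over the product
  have hψint : Integrable ψ ((μ.map W).prod (μ.map U)) := by
    rw [← hmap]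
    refine (integrable_map_measure hψm.aestronglyMeasurable hWUm.aemeasurable).2 ?_
    have : (fun ω => ψ (W ω, U ω)) = fun ω => f ω * (A.indicator (fun _ => (1:ℝ))) ω := by
      funext ω
      by_cases hω : U ω < Z ω
      · have hmem : ω ∈ A := hω
        simp only [hψ, hW]
        rw [if_pos hω, Set.indicator_of_mem hmem]
        ring
      · have hmem : ω ∉ A := hω
        simp only [hψ, hW]
        rw [if_neg hω, Set.indicator_of_notMem hmem]
        ring
    show Integrable (fun ω => ψ (W ω, U ω)) μ
    rw [this]
    refine mul_test_integrable hfm hfi (measurable_const.indicator hAm) fun ω => ?_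
    by_cases hω : ω ∈ A <;> simp [hω]
  -- step 2+3: Fubini
  have step3 : ∫ q, ψ q ∂((μ.map W).prod (μ.map U))
      = ∫ w, (∫ u, ψ (w, u) ∂(μ.map U)) ∂(μ.map W) := integral_prod _ hψint
  -- step 4: compute the inner integral
  have step4 : ∫ w, (∫ u, ψ (w, u) ∂(μ.map U)) ∂(μ.map W)
      = ∫ w, w.2 * w.1 ∂(μ.map W) := by
    refine integral_congr_ae ?_
    have hae : ∀ᵐ w ∂(μ.map W), w.2 ∈ Set.Icc (0:ℝ) 1 := by
      rw [ae_map_iff hWm.aemeasurable (measurable_snd (measurableSet_Icc))]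
      exact Filter.Eventually.of_forall fun ω => hZ01 ω
    filter_upwards [hae] with w hw
    have hinner : (fun u => ψ (w, u)) = fun u => (Set.Iio w.2).indicator (fun _ => w.1) u := by
      funext u
      by_cases hu : u < w.2
      · rw [hψ]; simp only
        rw [if_pos hu, Set.indicator_of_mem (Set.mem_Iio.2 hu)]
      · rw [hψ]; simp only
        rw [if_neg hu, Set.indicator_of_notMem (fun hmem => hu (Set.mem_Iio.1 hmem))]
    rw [hinner, integral_indicator_const _ measurableSet_Iio]
    have hlaw : (μ.map U) (Set.Iio w.2) = ENNReal.ofReal w.2 := by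
      rw [Measure.map_apply hUm measurableSet_Iio]
      exact unif μ Y hYm hCdf hw.1 hw.2
    rw [Measure.real, hlaw, ENNReal.toReal_ofReal hw.1, smul_eq_mul]
  -- step 5: back to Ω
  have step5 : ∫ w, w.2 * w.1 ∂(μ.map W) = ∫ ω, Z ω * f ω ∂μ := by
    rw [integral_map hWm.aemeasurable (f := fun w : ℝ × ℝ => w.2 * w.1) (measurable_snd.mul measurable_fst).aestronglyMeasurable]
  -- step 6: conditional expectation identity
  have hfXi : Integrable (f * X) μ := by
    have := mul_test_integrable hfm hfi hXm hX01
    exact this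
  have step6 : ∫ ω, Z ω * f ω ∂μ = ∫ ω, f ω * X ω ∂μ := by
    have hpull : μ[f * X | QH.sigmaGen G H] =ᵐ[μ] f * μ[X | QH.sigmaGen G H] :=
      condExp_mul_of_stronglyMeasurable_left hfmm.stronglyMeasurable hfXi hXi
    calc ∫ ω, Z ω * f ω ∂μ = ∫ ω, (f * μ[X | QH.sigmaGen G H]) ω ∂μ := by
          refine integral_congr_ae ?_
          filter_upwards [hZae] with ω hω
          simp only [Pi.mul_apply]
          rw [hω, mul_comm]
      _ = ∫ ω, (μ[f * X | QH.sigmaGen G H]) ω ∂μ := (integral_congr_ae hpull).symm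
      _ = ∫ ω, (f * X) ω ∂μ := integral_condExp hm
      _ = ∫ ω, f ω * X ω ∂μ := rfl
  rw [step1, hmap, step3, step4, step5, step6]


end NPAux

/-- Under Assumption (A1), for `x > 0`, if there is an `𝓕`-measurable `Y`,
independent of `σ(𝒢 ∪ ℋ)`, with continuous c.d.f., then some pure test `1_A` belongs to
`𝒳ₓ` and attains `V(x)`; consequently `V₁(x) = V(x)`. -/
theorem stmt_11 {Ω : Type*} [MeasurableSpace Ω] (μ : MeasureTheory.Measure Ω)
    [MeasureTheory.IsProbabilityMeasure μ]
    (G H : Set (Ω → ℝ)) (hA1 : QH.A1 μ G H) (x : ℝ) (hx : 0 < x)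
    (Y : Ω → ℝ) (hYm : Measurable Y)
    (hInd : ProbabilityTheory.Indep
      (MeasurableSpace.comap Y inferInstance) (QH.sigmaGen G H) μ)
    (hCdf : Continuous fun y : ℝ => (μ {ω | Y ω < y}).toReal) :
    ∃ A : Set Ω, MeasurableSet A ∧
      Set.indicator A (fun _ => (1 : ℝ)) ∈ QH.Tests μ H x ∧
      QH.powerInf μ G (Set.indicator A (fun _ => (1 : ℝ))) = QH.V μ G H x ∧
      QH.V1 μ G H x = QH.V μ G H x := by
  classical
  rcases Set.eq_empty_or_nonempty G with hGe | hGne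
  · have hPzero : ∀ X : Ω → ℝ, QH.powerInf μ G X = 0 := by
      intro X
      rw [hGe]
      simp [QH.powerInf, Real.sInf_empty]
    have h0mem : (fun _ : Ω => (0:ℝ)) ∈ QH.Tests μ H x := by
      refine ⟨⟨measurable_const, fun ω => by simp⟩, fun h hh => by simp [hx.le]⟩
    have hindeq : (Set.indicator (∅ : Set Ω) (fun _ => (1:ℝ))) = fun _ => (0:ℝ) := by
      funext ω; simp
    have hTmem : Set.indicator (∅ : Set Ω) (fun _ => (1:ℝ)) ∈ QH.Tests μ H x := by
      rw [hindeq]; exact h0mem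
    have hpuremem : (fun _ : Ω => (0:ℝ))
        ∈ {X ∈ QH.Tests μ H x | ∀ ω, X ω = 0 ∨ X ω = 1} :=
      ⟨h0mem, fun ω => Or.inl rfl⟩
    have hVz : QH.V μ G H x = 0 := by
      show sSup (QH.powerInf μ G '' QH.Tests μ H x) = 0
      rw [show QH.powerInf μ G = fun _ => (0:ℝ) from funext hPzero,
        Set.Nonempty.image_const ⟨_, h0mem⟩ 0]
      exact csSup_singleton 0
    have hV1z : QH.V1 μ G H x = 0 := by
      show sSup (QH.powerInf μ G '' {X ∈ QH.Tests μ H x | ∀ ω, X ω = 0 ∨ X ω = 1}) = 0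
      rw [show QH.powerInf μ G = fun _ => (0:ℝ) from funext hPzero,
        Set.Nonempty.image_const ⟨_, hpuremem⟩ 0]
      exact csSup_singleton 0
    exact ⟨∅, MeasurableSet.empty, hTmem, by rw [hPzero, hVz], by rw [hV1z, hVz]⟩
  · obtain ⟨Xh, hXhT, hXhopt⟩ := NPAux.exists_optimal μ G H hA1 x hx hGne
    obtain ⟨A, hAm, hAkey⟩ := NPAux.purify μ G H hA1 hXhT.1.1 hXhT.1.2 Y hYm hInd hCdf
    have hIndT : Set.indicator A (fun _ => (1:ℝ)) ∈ QH.Tests μ H x := by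
      refine ⟨⟨measurable_const.indicator hAm, fun ω => ?_⟩, fun h hh => ?_⟩
      · by_cases hω : ω ∈ A <;> simp [hω]
      · rw [hAkey h (Or.inr hh)]
        exact hXhT.2 h hh
    have hPeq : QH.powerInf μ G (Set.indicator A (fun _ => (1:ℝ))) = QH.powerInf μ G Xh := by
      show sInf _ = sInf _
      congr 1
      exact Set.image_congr fun g hg => hAkey g (Or.inl hg)
    obtain ⟨g₀, hg₀⟩ := hGne
    obtain ⟨hGL, hHL, hInt, _hBdd, _, _⟩ := hA1
    have hbdd : BddAbove (QH.powerInf μ G '' QH.Tests μ H x) := by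
      refine ⟨∫ ω, g₀ ω ∂μ, ?_⟩
      rintro b ⟨X, hX, rfl⟩
      have h1 : QH.powerInf μ G X ≤ ∫ ω, g₀ ω * X ω ∂μ := by
        refine csInf_le ⟨0, ?_⟩ ⟨g₀, hg₀, rfl⟩
        rintro b ⟨g, hg, rfl⟩
        exact NPAux.mul_test_nonneg ((hGL hg).2) hX.1.2
      exact h1.trans (NPAux.mul_test_le_self (hGL hg₀).1 ((hGL hg₀).2)
        (hInt g₀ (Or.inl hg₀)) hX.1.1 hX.1.2)
    have hpure : ∀ ω, Set.indicator A (fun _ => (1:ℝ)) ω = 0 ∨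
        Set.indicator A (fun _ => (1:ℝ)) ω = 1 := by
      intro ω
      by_cases hω : ω ∈ A
      · right; simp [hω]
      · left; simp [hω]
    have hVmem : QH.V μ G H x ∈
        QH.powerInf μ G '' {X ∈ QH.Tests μ H x | ∀ ω, X ω = 0 ∨ X ω = 1} :=
      ⟨_, ⟨hIndT, hpure⟩, by rw [hPeq, hXhopt]⟩
    have hV1le : QH.V1 μ G H x ≤ QH.V μ G H x :=
      csSup_le_csSup hbdd ⟨_, hVmem⟩ (Set.image_mono (Set.sep_subset _ _))
    have hV1ge : QH.V μ G H x ≤ QH.V1 μ G H x :=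
      le_csSup (hbdd.mono (Set.image_mono (Set.sep_subset _ _))) hVmem
    exact ⟨A, hAm, hIndT, by rw [hPeq, hXhopt], le_antisymm hV1le hV1ge⟩
end

section
/- (Condition C1.) Suppose 𝒢 and ℋ are singletons of integrable nonnegative random variables, and there exists an 𝓕-measurable random variable whose cumulative distribution function under ℙ is continuous. Then V₁(x) = V(x) for every x > 0, for every x > 0 there exists a pure test that simultaneously attains V(x) and V₁(x), and x ↦ V₁(x) is continuous, concave, and non-decreasing on (0,∞). -/
open MeasureTheory

section NPsection

set_option linter.unusedSectionVars false

open Filter Topology Set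
open scoped ENNReal NNReal

namespace NPaux

variable {Ω : Type*} [MeasurableSpace Ω] {μ : Measure Ω} [IsProbabilityMeasure μ]
variable {G H : Ω → ℝ}

lemma integrable_mul_test (hGm : Measurable G) (hGpos : ∀ ω, 0 ≤ G ω)
    (hGi : Integrable G μ) {X : Ω → ℝ} (hXm : Measurable X)
    (hX0 : ∀ ω, 0 ≤ X ω) (hX1 : ∀ ω, X ω ≤ 1) :
    Integrable (fun ω => G ω * X ω) μ := by
  refine hGi.mono' ((hGm.mul hXm).aestronglyMeasurable) (Filter.Eventually.of_forall fun ω => ?_)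
  rw [Real.norm_eq_abs, abs_of_nonneg (mul_nonneg (hGpos ω) (hX0 ω))]
  calc G ω * X ω ≤ G ω * 1 := mul_le_mul_of_nonneg_left (hX1 ω) (hGpos ω)
  _ = G ω := mul_one _

lemma integral_mul_indicator {f : Ω → ℝ} {s : Set Ω} (hs : MeasurableSet s) :
    ∫ ω, f ω * s.indicator (fun _ => (1:ℝ)) ω ∂μ = ∫ ω in s, f ω ∂μ := by
  rw [← integral_indicator hs]
  refine integral_congr_ae (Filter.Eventually.of_forall fun ω => ?_)
  by_cases h : ω ∈ s <;> simp [h]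

lemma NP_opt (hGm : Measurable G) (hGpos : ∀ ω, 0 ≤ G ω) (hGi : Integrable G μ)
    (hHm : Measurable H) (hHpos : ∀ ω, 0 ≤ H ω) (hHi : Integrable H μ)
    {a x : ℝ} (ha : 0 ≤ a) {A : Set Ω} (hAm : MeasurableSet A)
    (hA1 : ∀ ω ∈ A, a * H ω ≤ G ω) (hA2 : ∀ ω ∉ A, G ω ≤ a * H ω)
    (hlev : ∫ ω, H ω * A.indicator (fun _ => (1:ℝ)) ω ∂μ = x)
    {X : Ω → ℝ} (hXm : Measurable X) (hX0 : ∀ ω, 0 ≤ X ω) (hX1 : ∀ ω, X ω ≤ 1)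
    (hXfeas : ∫ ω, H ω * X ω ∂μ ≤ x) :
    ∫ ω, G ω * X ω ∂μ ≤ ∫ ω, G ω * A.indicator (fun _ => (1:ℝ)) ω ∂μ := by
  set i : Ω → ℝ := A.indicator (fun _ => (1:ℝ)) with hi
  have him : Measurable i := measurable_const.indicator hAm
  have hi0 : ∀ ω, 0 ≤ i ω := fun ω => by by_cases h : ω ∈ A <;> simp [hi, h]
  have hi1 : ∀ ω, i ω ≤ 1 := fun ω => by by_cases h : ω ∈ A <;> simp [hi, h]
  have hGi' := integrable_mul_test hGm hGpos hGi him hi0 hi1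
  have hGX := integrable_mul_test hGm hGpos hGi hXm hX0 hX1
  have hHi' := integrable_mul_test hHm hHpos hHi him hi0 hi1
  have hHX := integrable_mul_test hHm hHpos hHi hXm hX0 hX1
  have key : 0 ≤ ∫ ω, (G ω - a * H ω) * (i ω - X ω) ∂μ := by
    refine integral_nonneg fun ω => ?_
    simp only [Pi.zero_apply]
    by_cases h : ω ∈ A
    · have h1 : i ω = 1 := by simp [hi, h]
      have := hA1 ω h
      nlinarith [hX1 ω]
    · have h1 : i ω = 0 := by simp [hi, h]
      have := hA2 ω h
      nlinarith [hX0 ω]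
  have expand : ∫ ω, (G ω - a * H ω) * (i ω - X ω) ∂μ
      = ((∫ ω, G ω * i ω ∂μ) - (∫ ω, G ω * X ω ∂μ))
        - a * (∫ ω, H ω * i ω ∂μ) + a * (∫ ω, H ω * X ω ∂μ) := by
    have e1 : (fun ω => (G ω - a * H ω) * (i ω - X ω))
        = fun ω => (G ω * i ω - G ω * X ω - a * (H ω * i ω)) + a * (H ω * X ω) :=
      funext fun ω => by ring
    have I1 : ∫ ω, (G ω * i ω - G ω * X ω - a * (H ω * i ω) + a * (H ω * X ω)) ∂μ
        = (∫ ω, (G ω * i ω - G ω * X ω - a * (H ω * i ω)) ∂μ) + ∫ ω, a * (H ω * X ω) ∂μ :=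
      integral_add ((hGi'.sub hGX).sub (hHi'.const_mul a)) (hHX.const_mul a)
    have I2 : ∫ ω, (G ω * i ω - G ω * X ω - a * (H ω * i ω)) ∂μ
        = (∫ ω, (G ω * i ω - G ω * X ω) ∂μ) - ∫ ω, a * (H ω * i ω) ∂μ :=
      integral_sub (hGi'.sub hGX) (hHi'.const_mul a)
    have I3 : ∫ ω, (G ω * i ω - G ω * X ω) ∂μ
        = (∫ ω, G ω * i ω ∂μ) - ∫ ω, G ω * X ω ∂μ := integral_sub hGi' hGX
    have I4 : ∫ ω, a * (H ω * i ω) ∂μ = a * ∫ ω, H ω * i ω ∂μ := integral_const_mul a _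
    have I5 : ∫ ω, a * (H ω * X ω) ∂μ = a * ∫ ω, H ω * X ω ∂μ := integral_const_mul a _
    rw [e1, I1, I2, I3, I4, I5]
  rw [expand, hlev] at key
  nlinarith [mul_le_mul_of_nonneg_left hXfeas ha]

end NPaux

namespace NPaux2

variable {Ω : Type*} [MeasurableSpace Ω] {μ : Measure Ω} [IsProbabilityMeasure μ]
variable {H : Ω → ℝ}

lemma seq_anti : Antitone (fun n : ℕ => (1:ℝ)/(n+1)) := by
  intro n m h
  apply one_div_le_one_div_of_le (by positivity)
  have : (n:ℝ) ≤ m := Nat.cast_le.2 h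
  linarith

lemma seq_pos (n : ℕ) : (0:ℝ) < 1/(n+1) := by positivity

lemma seq_tendsto : Tendsto (fun n : ℕ => (1:ℝ)/(n+1)) atTop (𝓝 0) :=
  tendsto_one_div_add_atTop_nhds_zero_nat

lemma iInter_lt_seq (Y : Ω → ℝ) (c : ℝ) :
    ⋂ n : ℕ, {ω | Y ω < c + 1/(n+1)} = {ω | Y ω ≤ c} := by
  ext ω
  simp only [Set.mem_iInter, Set.mem_setOf_eq]
  constructor
  · intro h
    by_contra hc
    push_neg at hc
    obtain ⟨n, hn⟩ := exists_nat_one_div_lt (sub_pos.2 hc)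
    have := h n
    linarith
  · intro h n
    have := seq_pos n
    linarith

lemma iUnion_lt_seq (Y : Ω → ℝ) (c : ℝ) :
    ⋃ n : ℕ, {ω | Y ω < c - 1/(n+1)} = {ω | Y ω < c} := by
  ext ω
  simp only [Set.mem_iUnion, Set.mem_setOf_eq]
  constructor
  · rintro ⟨n, hn⟩
    have := seq_pos n
    linarith
  · intro h
    obtain ⟨n, hn⟩ := exists_nat_one_div_lt (sub_pos.2 h)
    exact ⟨n, by linarith⟩

/-- If the c.d.f. of `Y` is continuous then every level set `{Y = c}` is null. -/
lemma atom_zero {Y : Ω → ℝ} (hYm : Measurable Y)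
    (hYc : Continuous fun y : ℝ => (μ {ω | Y ω < y}).toReal) (c : ℝ) :
    μ {ω | Y ω = c} = 0 := by
  have hanti : Antitone (fun n : ℕ => {ω | Y ω < c + 1/(n+1)}) := by
    intro n m h ω hω
    simp only [Set.mem_setOf_eq] at *
    have := seq_anti h
    calc Y ω < c + 1/(m+1) := hω
    _ ≤ c + 1/(n+1) := by linarith [seq_anti h]
  have h1 : Tendsto (fun n : ℕ => μ {ω | Y ω < c + 1/(n+1)}) atTop (𝓝 (μ {ω | Y ω ≤ c})) := by
    rw [← iInter_lt_seq Y c]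
    exact tendsto_measure_iInter_atTop
      (fun n => (hYm measurableSet_Iio).nullMeasurableSet) hanti ⟨0, measure_ne_top μ _⟩
  have h2 : Tendsto (fun n : ℕ => (μ {ω | Y ω < c + 1/(n+1)}).toReal) atTop
      (𝓝 (μ {ω | Y ω ≤ c}).toReal) :=
    (ENNReal.tendsto_toReal (measure_ne_top μ _)).comp h1
  have h3 : Tendsto (fun n : ℕ => (μ {ω | Y ω < c + 1/(n+1)}).toReal) atTop
      (𝓝 (μ {ω | Y ω < c}).toReal) := by
    have hc : Tendsto (fun n : ℕ => c + 1/((n:ℝ)+1)) atTop (𝓝 c) := by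
      have := (tendsto_const_nhds (x := c) (f := atTop (α := ℕ))).add seq_tendsto
      simpa using this
    exact (hYc.tendsto c).comp hc
  have heq : μ {ω | Y ω ≤ c} = μ {ω | Y ω < c} :=
    (ENNReal.toReal_eq_toReal_iff' (measure_ne_top μ _) (measure_ne_top μ _)).1
      (tendsto_nhds_unique h2 h3)
  have hset : {ω | Y ω = c} = {ω | Y ω ≤ c} \ {ω | Y ω < c} := by
    ext ω; simp only [Set.mem_setOf_eq, Set.mem_diff, not_lt]
    constructor
    · rintro rfl; exact ⟨le_rfl, le_rfl⟩
    · rintro ⟨h1', h2'⟩; exact le_antisymm h1' h2'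
  have hsub : {ω | Y ω < c} ⊆ {ω | Y ω ≤ c} := fun ω hω => le_of_lt (show Y ω < c from hω)
  rw [hset, measure_diff hsub ((hYm measurableSet_Iio).nullMeasurableSet) (measure_ne_top μ _),
    heq, tsub_self]

end NPaux2

namespace NPaux3

open NPaux2

variable {Ω : Type*} [MeasurableSpace Ω] {μ : Measure Ω} [IsProbabilityMeasure μ]
variable {H : Ω → ℝ}

lemma exists_slice (hHm : Measurable H) (hHpos : ∀ ω, 0 ≤ H ω) (hHi : Integrable H μ)
    (hY : ∃ Y : Ω → ℝ, Measurable Y ∧ Continuous fun y : ℝ => (μ {ω | Y ω < y}).toReal)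
    {D : Set Ω} (hD : MeasurableSet D) {δ : ℝ} (hδ0 : 0 ≤ δ)
    (hδtop : δ ≤ ∫ ω in D, H ω ∂μ) :
    ∃ S : Set Ω, MeasurableSet S ∧ S ⊆ D ∧ ∫ ω in S, H ω ∂μ = δ := by
  obtain ⟨Y, hYm, hYc⟩ := hY
  set w : Ω → ℝ≥0∞ := fun ω => ENNReal.ofReal (D.indicator H ω) with hw
  have hwm : Measurable w := (hHm.indicator hD).ennreal_ofReal
  set ν : Measure Ω := μ.withDensity w with hν
  have hfinu : ν Set.univ < ⊤ := by
    rw [hν, withDensity_apply _ MeasurableSet.univ, Measure.restrict_univ]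
    calc ∫⁻ ω, w ω ∂μ ≤ ∫⁻ ω, ‖H ω‖₊ ∂μ := by
          refine lintegral_mono fun ω => ?_
          rw [hw]
          calc ENNReal.ofReal (D.indicator H ω) ≤ ENNReal.ofReal ‖H ω‖ := by
                apply ENNReal.ofReal_le_ofReal
                by_cases h : ω ∈ D
                · simp [h, Real.norm_eq_abs, le_abs_self]
                · simp [h, norm_nonneg]
          _ = ‖H ω‖₊ := ofReal_norm _
    _ < ⊤ := hHi.2
  haveI : IsFiniteMeasure ν := ⟨hfinu⟩
  have key : ∀ s : Set Ω, MeasurableSet s → (ν s).toReal = ∫ ω in s ∩ D, H ω ∂μ := by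
    intro s hs
    have h1 : ∫ ω in s, D.indicator H ω ∂μ
        = (∫⁻ ω in s, ENNReal.ofReal (D.indicator H ω) ∂μ).toReal := by
      refine integral_eq_lintegral_of_nonneg_ae ?_ ((hHm.indicator hD).aestronglyMeasurable) 
      exact Filter.Eventually.of_forall fun ω => Set.indicator_nonneg (fun ω _ => hHpos ω) ω
    have h2 : ∫ ω in s, D.indicator H ω ∂μ = ∫ ω in s ∩ D, H ω ∂μ := by
      rw [← integral_indicator hs, Set.indicator_indicator, integral_indicator (hs.inter hD)]
    rw [hν, withDensity_apply _ hs, ← h1, h2]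
  have hmono : Monotone fun c : ℝ => (ν {ω | Y ω < c}).toReal := by
    intro c d hcd
    apply ENNReal.toReal_le_toReal (measure_ne_top ν _) (measure_ne_top ν _) |>.2
    exact measure_mono fun ω hω => lt_of_lt_of_le hω hcd
  set F : ℝ → ℝ := fun c => (ν {ω | Y ω < c}).toReal with hF
  -- continuity of F
  have hcont : Continuous F := by
    rw [continuous_iff_continuousAt]
    intro c
    rw [continuousAt_iff_continuous_left'_right']
    constructor
    · have hten := hmono.tendsto_nhdsLT c
      have hseq : Tendsto (fun n : ℕ => F (c - 1/(n+1))) atTop (𝓝 (F c)) := by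
        have hm : Monotone fun n : ℕ => {ω | Y ω < c - 1/(n+1)} := by
          intro n m h ω hω
          simp only [Set.mem_setOf_eq] at *
          linarith [seq_anti h]
        have := tendsto_measure_iUnion_atTop (μ := ν) hm
        rw [iUnion_lt_seq Y c] at this
        exact (ENNReal.tendsto_toReal (measure_ne_top ν _)).comp this
      have hlub : IsLUB (F '' Set.Iio c) (F c) := by
        constructor
        · rintro _ ⟨y, hy, rfl⟩
          exact hmono (le_of_lt hy)
        · intro b hb
          refine le_of_tendsto hseq (Filter.Eventually.of_forall fun n => ?_)
          refine hb ⟨c - 1/(n+1), ?_, rfl⟩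
          have := seq_pos n
          simp only [Set.mem_Iio]; linarith
      rwa [hlub.csSup_eq ⟨F (c-1), ⟨c-1, by simp, rfl⟩⟩] at hten
    · have hten := hmono.tendsto_nhdsGT c
      have hseq : Tendsto (fun n : ℕ => F (c + 1/(n+1))) atTop (𝓝 (F c)) := by
        have hanti : Antitone fun n : ℕ => {ω | Y ω < c + 1/(n+1)} := by
          intro n m h ω hω
          simp only [Set.mem_setOf_eq] at *
          linarith [seq_anti h]
        have hlim := tendsto_measure_iInter_atTop (μ := ν)
          (fun n => (measurableSet_lt hYm measurable_const).nullMeasurableSet) hanti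
          ⟨0, measure_ne_top ν _⟩
        rw [iInter_lt_seq Y c] at hlim
        have hzero : ν {ω | Y ω = c} = 0 :=
          (withDensity_absolutelyContinuous μ w) (atom_zero hYm hYc c)
        have hRe : ν {ω | Y ω ≤ c} = ν {ω | Y ω < c} := by
          have hsplit : {ω | Y ω ≤ c} = {ω | Y ω < c} ∪ {ω | Y ω = c} := by
            ext ω; simp only [Set.mem_setOf_eq, Set.mem_union]
            exact ⟨fun h => h.lt_or_eq, fun h => h.elim le_of_lt le_of_eq⟩
          refine le_antisymm ?_ (measure_mono fun ω hω => le_of_lt (show Y ω < c from hω))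
          calc ν {ω | Y ω ≤ c} ≤ ν {ω | Y ω < c} + ν {ω | Y ω = c} := by
                rw [hsplit]; exact measure_union_le _ _
          _ = ν {ω | Y ω < c} := by rw [hzero, add_zero]
        rw [hRe] at hlim
        exact (ENNReal.tendsto_toReal (measure_ne_top ν _)).comp hlim
      have hglb : IsGLB (F '' Set.Ioi c) (F c) := by
        constructor
        · rintro _ ⟨y, hy, rfl⟩
          exact hmono (le_of_lt hy)
        · intro b hb
          refine ge_of_tendsto hseq (Filter.Eventually.of_forall fun n => ?_)
          refine hb ⟨c + 1/(n+1), ?_, rfl⟩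
          have := seq_pos n
          simp only [Set.mem_Ioi]; linarith
      rwa [hglb.csInf_eq ⟨F (c+1), ⟨c+1, by simp, rfl⟩⟩] at hten
  -- total mass
  have htot : (ν Set.univ).toReal = ∫ ω in D, H ω ∂μ := by
    rw [key Set.univ MeasurableSet.univ, Set.univ_inter]
  rw [← htot] at hδtop
  rcases hδtop.lt_or_eq with hlt | heq
  · -- IVT case
    rcases hδ0.lt_or_eq with hδpos | hδzero
    · -- 0 < δ < total
      have hsupF : Tendsto (fun n : ℕ => F n) atTop (𝓝 ((ν Set.univ).toReal)) := by
        have hm : Monotone fun n : ℕ => {ω | Y ω < (n:ℝ)} := by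
          intro n m h ω hω
          simp only [Set.mem_setOf_eq] at *
          exact lt_of_lt_of_le hω (Nat.cast_le.2 h)
        have := tendsto_measure_iUnion_atTop (μ := ν) hm
        have hU : ⋃ n : ℕ, {ω | Y ω < (n:ℝ)} = Set.univ := by
          rw [Set.eq_univ_iff_forall]
          intro ω
          obtain ⟨n, hn⟩ := exists_nat_gt (Y ω)
          exact Set.mem_iUnion.2 ⟨n, hn⟩
        rw [hU] at this
        exact (ENNReal.tendsto_toReal (measure_ne_top ν _)).comp this
      have hbotF : Tendsto (fun n : ℕ => F (-(n:ℝ))) atTop (𝓝 0) := by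
        have hanti : Antitone fun n : ℕ => {ω | Y ω < -(n:ℝ)} := by
          intro n m h ω hω
          simp only [Set.mem_setOf_eq] at *
          have : (n:ℝ) ≤ m := Nat.cast_le.2 h
          linarith
        have hlim := tendsto_measure_iInter_atTop (μ := ν)
          (fun n => (measurableSet_lt hYm measurable_const).nullMeasurableSet) hanti
          ⟨0, measure_ne_top ν _⟩
        have hI : ⋂ n : ℕ, {ω | Y ω < -(n:ℝ)} = (∅ : Set Ω) := by
          rw [Set.eq_empty_iff_forall_notMem]
          intro ω hω
          obtain ⟨n, hn⟩ := exists_nat_gt (-(Y ω))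
          have := Set.mem_iInter.1 hω n
          simp only [Set.mem_setOf_eq] at this
          linarith
        rw [hI, measure_empty] at hlim
        have := (ENNReal.tendsto_toReal (by simp : (0:ℝ≥0∞) ≠ ⊤)).comp hlim
        exact this
      obtain ⟨n, hn⟩ := (hsupF.eventually (eventually_gt_nhds hlt)).exists
      obtain ⟨m, hm⟩ := (hbotF.eventually (eventually_lt_nhds hδpos)).exists
      have hab : -(m:ℝ) ≤ (n:ℝ) := by
        by_contra hcon
        push_neg at hcon
        have := hmono (le_of_lt hcon)
        linarith
      have hIcc : δ ∈ Set.Icc (F (-(m:ℝ))) (F n) := ⟨le_of_lt hm, le_of_lt hn⟩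
      obtain ⟨c, -, hc⟩ := intermediate_value_Icc hab hcont.continuousOn hIcc
      refine ⟨(Y ⁻¹' Set.Iio c) ∩ D, (hYm measurableSet_Iio).inter hD, Set.inter_subset_right, ?_⟩
      have := key (Y ⁻¹' Set.Iio c) (hYm measurableSet_Iio)
      rw [← this]
      exact hc
    · -- δ = 0
      exact ⟨∅, MeasurableSet.empty, Set.empty_subset _, by simp [← hδzero]⟩
  · -- δ = total
    refine ⟨D, hD, subset_rfl, ?_⟩
    rw [← htot, heq]

end NPaux3

namespace NPmain

open NPaux NPaux2 NPaux3

variable {Ω : Type*} [MeasurableSpace Ω] {μ : Measure Ω} [IsProbabilityMeasure μ]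
variable {G H : Ω → ℝ}

/-- Main construction: an optimal pure test at level `x`. -/
lemma exists_npA (hGm : Measurable G) (hGpos : ∀ ω, 0 ≤ G ω) (hGi : Integrable G μ)
    (hHm : Measurable H) (hHpos : ∀ ω, 0 ≤ H ω) (hHi : Integrable H μ)
    (hY : ∃ Y : Ω → ℝ, Measurable Y ∧ Continuous fun y : ℝ => (μ {ω | Y ω < y}).toReal)
    {x : ℝ} (hx : 0 < x) :
    ∃ A : Set Ω, MeasurableSet A ∧
      (∫ ω, H ω * A.indicator (fun _ => (1:ℝ)) ω ∂μ) ≤ x ∧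
      ∀ X : Ω → ℝ, Measurable X → (∀ ω, 0 ≤ X ω) → (∀ ω, X ω ≤ 1) →
        (∫ ω, H ω * X ω ∂μ) ≤ x →
        (∫ ω, G ω * X ω ∂μ) ≤ ∫ ω, G ω * A.indicator (fun _ => (1:ℝ)) ω ∂μ := by
  by_cases hHx : ∫ ω, H ω ∂μ ≤ x
  · -- trivial case : take A = univ
    refine ⟨Set.univ, MeasurableSet.univ, ?_, ?_⟩
    · calc ∫ ω, H ω * Set.indicator Set.univ (fun _ => (1:ℝ)) ω ∂μ = ∫ ω, H ω ∂μ := by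
            refine integral_congr_ae (Filter.Eventually.of_forall fun ω => ?_)
            simp
      _ ≤ x := hHx
    · intro X hXm hX0 hX1 hXf
      have h1 : ∫ ω, G ω * X ω ∂μ ≤ ∫ ω, G ω ∂μ := by
        refine integral_mono (integrable_mul_test hGm hGpos hGi hXm hX0 hX1) hGi fun ω => ?_
        calc G ω * X ω ≤ G ω * 1 := mul_le_mul_of_nonneg_left (hX1 ω) (hGpos ω)
        _ = G ω := mul_one _
      calc ∫ ω, G ω * X ω ∂μ ≤ ∫ ω, G ω ∂μ := h1
      _ = ∫ ω, G ω * Set.indicator Set.univ (fun _ => (1:ℝ)) ω ∂μ := by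
        refine integral_congr_ae (Filter.Eventually.of_forall fun ω => ?_)
        simp
  · push_neg at hHx
    -- φ a = ∫_{aH<G} H
    set φ : ℝ → ℝ := fun a => ∫ ω in {ω | a * H ω < G ω}, H ω ∂μ with hφ
    have hsm : ∀ a : ℝ, MeasurableSet {ω | a * H ω < G ω} :=
      fun a => measurableSet_lt (hHm.const_mul a) hGm
    have hφanti : Antitone φ := by
      intro a b hab
      refine setIntegral_mono_set hHi.integrableOn
        (Filter.Eventually.of_forall fun ω => hHpos ω) (HasSubset.Subset.eventuallyLE ?_)
      intro ω hω
      simp only [Set.mem_setOf_eq] at *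
      calc a * H ω ≤ b * H ω := mul_le_mul_of_nonneg_right hab (hHpos ω)
      _ < G ω := hω
    -- there is some large a with φ a ≤ x
    have hbig : ∃ n : ℕ, φ n ≤ x := by
      have hanti : Antitone fun n : ℕ => {ω | (n:ℝ) * H ω < G ω} := by
        intro n m h ω hω
        simp only [Set.mem_setOf_eq] at *
        calc (n:ℝ) * H ω ≤ (m:ℝ) * H ω :=
              mul_le_mul_of_nonneg_right (Nat.cast_le.2 h) (hHpos ω)
        _ < G ω := hω
      have hlim := tendsto_setIntegral_of_antitone (μ := μ) (f := H)
        (fun n : ℕ => hsm n) hanti ⟨0, hHi.integrableOn⟩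
      have hzero : ∫ ω in ⋂ n : ℕ, {ω | (n:ℝ) * H ω < G ω}, H ω ∂μ = 0 := by
        have hsub : ∀ ω ∈ ⋂ n : ℕ, {ω | (n:ℝ) * H ω < G ω}, H ω = 0 := by
          intro ω hω
          by_contra hne
          have hpos : 0 < H ω := lt_of_le_of_ne (hHpos ω) (Ne.symm hne)
          obtain ⟨n, hn⟩ := exists_nat_gt (G ω / H ω)
          have := Set.mem_iInter.1 hω n
          simp only [Set.mem_setOf_eq] at this
          have : G ω / H ω < n := hn
          rw [div_lt_iff₀ hpos] at this
          linarith [Set.mem_iInter.1 hω n]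
        calc ∫ ω in ⋂ n : ℕ, {ω | (n:ℝ) * H ω < G ω}, H ω ∂μ
            = ∫ ω in ⋂ n : ℕ, {ω | (n:ℝ) * H ω < G ω}, (0:ℝ) ∂μ :=
              setIntegral_congr_fun (MeasurableSet.iInter fun n => hsm n) hsub
        _ = 0 := by simp
      rw [hzero] at hlim
      obtain ⟨n, hn⟩ := (hlim.eventually (eventually_lt_nhds hx)).exists
      exact ⟨n, le_of_lt hn⟩
    obtain ⟨nbig, hnbig⟩ := hbig
    set Sset : Set ℝ := {a : ℝ | 0 ≤ a ∧ φ a ≤ x} with hSset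
    have hSne : Sset.Nonempty := ⟨nbig, ⟨Nat.cast_nonneg _, hnbig⟩⟩
    have hSbdd : BddBelow Sset := ⟨0, fun a ha => ha.1⟩
    set a₀ : ℝ := sInf Sset with ha₀def
    have ha₀0 : 0 ≤ a₀ := le_csInf hSne fun a ha => ha.1
    have htail : ∀ b, a₀ < b → φ b ≤ x := by
      intro b hb
      obtain ⟨a, haS, hab⟩ := (csInf_lt_iff hSbdd hSne).1 hb
      exact le_trans (hφanti (le_of_lt hab)) haS.2
    -- step 3 : φ a₀ ≤ x
    have hstep3 : φ a₀ ≤ x := by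
      have hm : Monotone fun n : ℕ => {ω | (a₀ + 1/(n+1)) * H ω < G ω} := by
        intro n m h ω hω
        simp only [Set.mem_setOf_eq] at *
        have h1 : 1/((m:ℝ)+1) ≤ 1/((n:ℝ)+1) := seq_anti h
        nlinarith [hHpos ω]
      have hU : (⋃ n : ℕ, {ω | (a₀ + 1/(n+1)) * H ω < G ω}) = {ω | a₀ * H ω < G ω} := by
        ext ω
        simp only [Set.mem_iUnion, Set.mem_setOf_eq]
        constructor
        · rintro ⟨n, hn⟩
          have h1 := seq_pos n
          nlinarith [hHpos ω]
        · intro h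
          rcases eq_or_lt_of_le (hHpos ω) with hH0 | hHp
          · exact ⟨0, by rw [← hH0]; simpa [← hH0] using h⟩
          · obtain ⟨n, hn⟩ := exists_nat_one_div_lt
              (div_pos (sub_pos.2 h) hHp)
            refine ⟨n, ?_⟩
            have hpos : (0:ℝ) < (n:ℝ)+1 := by positivity
            rw [div_lt_div_iff₀ (by positivity) hHp] at hn
            have h2 : H ω / ((n:ℝ)+1) < G ω - a₀ * H ω := (div_lt_iff₀ hpos).2 (by linarith)
            have h3 : (a₀ + 1/((n:ℝ)+1)) * H ω = a₀ * H ω + H ω/((n:ℝ)+1) := by ring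
            linarith
      have hlim := tendsto_setIntegral_of_monotone (μ := μ) (f := H)
        (fun n : ℕ => hsm _) hm (by rw [hU]; exact hHi.integrableOn)
      rw [hU] at hlim
      refine le_of_tendsto hlim (Filter.Eventually.of_forall fun n => ?_)
      exact htail _ (by linarith [seq_pos n])
    -- step 4 : x ≤ ∫_{a₀ H ≤ G} H
    have hsm' : MeasurableSet {ω | a₀ * H ω ≤ G ω} := measurableSet_le (hHm.const_mul a₀) hGm
    have hstep4 : x ≤ ∫ ω in {ω | a₀ * H ω ≤ G ω}, H ω ∂μ := by
      rcases eq_or_lt_of_le ha₀0 with ha0 | ha0pos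
      · have : {ω | a₀ * H ω ≤ G ω} = Set.univ := by
          rw [Set.eq_univ_iff_forall]
          intro ω
          simp only [Set.mem_setOf_eq, ← ha0, zero_mul]
          exact hGpos ω
        rw [this, setIntegral_univ]
        exact le_of_lt hHx
      · set b : ℕ → ℝ := fun n => a₀ - a₀/(n+2) with hb
        have hb0 : ∀ n, 0 ≤ b n := by
          intro n
          rw [hb]
          have h2 : a₀/(n+2) ≤ a₀/1 := by
            apply div_le_div_of_nonneg_left ha₀0 one_pos
            have : (0:ℝ) ≤ n := Nat.cast_nonneg n
            linarith
          simp only []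
          rw [div_one] at h2
          linarith
        have hblt : ∀ n, b n < a₀ := by
          intro n
          have : 0 < a₀/(n+2) := by positivity
          simp only [hb]
          linarith
        have hbmono : Monotone b := by
          intro n m h
          simp only [hb]
          have : a₀/((m:ℝ)+2) ≤ a₀/((n:ℝ)+2) := by
            apply div_le_div_of_nonneg_left ha₀0 (by positivity)
            have : (n:ℝ) ≤ m := Nat.cast_le.2 h
            linarith
          linarith
        have hbtend : Tendsto b atTop (𝓝 a₀) := by
          rw [hb]
          have h1 : Tendsto (fun n : ℕ => a₀/((n:ℝ)+2)) atTop (𝓝 0) := by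
            apply Tendsto.div_atTop (tendsto_const_nhds)
            apply Filter.tendsto_atTop_add_const_right
            exact tendsto_natCast_atTop_atTop
          have := (tendsto_const_nhds (x := a₀) (f := atTop (α := ℕ))).sub h1
          simpa using this
        have hgt : ∀ n, x < φ (b n) := by
          intro n
          have hnot : b n ∉ Sset := notMem_of_lt_csInf (by rw [← ha₀def]; exact hblt n) hSbdd
          rw [hSset] at hnot
          simp only [Set.mem_setOf_eq, not_and, not_le] at hnot
          exact hnot (hb0 n)
        have hanti : Antitone fun n : ℕ => {ω | b n * H ω < G ω} := by
          intro n m h ω hω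
          simp only [Set.mem_setOf_eq] at *
          calc b n * H ω ≤ b m * H ω := mul_le_mul_of_nonneg_right (hbmono h) (hHpos ω)
          _ < G ω := hω
        have hlim := tendsto_setIntegral_of_antitone (μ := μ) (f := H)
          (fun n : ℕ => hsm _) hanti ⟨0, hHi.integrableOn⟩
        -- identify the limit integral with the integral over {a₀ H ≤ G}
        have hIeq : ∫ ω in ⋂ n : ℕ, {ω | b n * H ω < G ω}, H ω ∂μ
            = ∫ ω in {ω | a₀ * H ω ≤ G ω}, H ω ∂μ := by
          rw [← integral_indicator (MeasurableSet.iInter fun n => hsm _),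
            ← integral_indicator hsm']
          refine integral_congr_ae (Filter.Eventually.of_forall fun ω => ?_)
          rcases eq_or_lt_of_le (hHpos ω) with hH0 | hHp
          · by_cases h1 : ω ∈ ⋂ n : ℕ, {ω | b n * H ω < G ω} <;>
              by_cases h2 : ω ∈ {ω | a₀ * H ω ≤ G ω} <;>
              simp [h1, h2, Set.indicator_of_mem, Set.indicator_of_notMem, ← hH0]
          · have hiff : (ω ∈ ⋂ n : ℕ, {ω | b n * H ω < G ω}) ↔ ω ∈ {ω | a₀ * H ω ≤ G ω} := by
              simp only [Set.mem_iInter, Set.mem_setOf_eq]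
              constructor
              · intro h
                have hten : Tendsto (fun n => b n * H ω) atTop (𝓝 (a₀ * H ω)) :=
                  hbtend.mul_const _
                exact le_of_tendsto hten (Filter.Eventually.of_forall fun n => le_of_lt (h n))
              · intro h n
                calc b n * H ω < a₀ * H ω := by
                      apply mul_lt_mul_of_pos_right (hblt n) hHp
                _ ≤ G ω := h
            by_cases h1 : ω ∈ ⋂ n : ℕ, {ω | b n * H ω < G ω}
            · rw [Set.indicator_of_mem h1, Set.indicator_of_mem (hiff.1 h1)]
            · rw [Set.indicator_of_notMem h1, Set.indicator_of_notMem (fun hc => h1 (hiff.2 hc))]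
        rw [hIeq] at hlim
        refine ge_of_tendsto hlim (Filter.Eventually.of_forall fun n => le_of_lt (hgt n))
    -- step 5 : boundary set and slice
    set D : Set Ω := {ω | G ω = a₀ * H ω} with hDdef
    have hDm : MeasurableSet D := measurableSet_eq_fun hGm (hHm.const_mul a₀)
    have hdisj : Disjoint {ω | a₀ * H ω < G ω} D := by
      rw [Set.disjoint_left]
      intro ω h1 h2
      simp only [Set.mem_setOf_eq, hDdef] at h1 h2
      linarith
    have hsplit : ∫ ω in {ω | a₀ * H ω ≤ G ω}, H ω ∂μ = φ a₀ + ∫ ω in D, H ω ∂μ := by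
      have hunion : {ω | a₀ * H ω ≤ G ω} = {ω | a₀ * H ω < G ω} ∪ D := by
        ext ω
        simp only [Set.mem_setOf_eq, Set.mem_union, hDdef]
        constructor
        · intro h
          rcases lt_or_eq_of_le h with h' | h'
          · exact Or.inl h'
          · exact Or.inr h'.symm
        · rintro (h | h)
          · exact le_of_lt h
          · exact h.ge
      rw [hunion, setIntegral_union hdisj hDm hHi.integrableOn hHi.integrableOn]
    have hd0 : 0 ≤ x - φ a₀ := sub_nonneg.2 hstep3
    have hdtop : x - φ a₀ ≤ ∫ ω in D, H ω ∂μ := by linarith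
    obtain ⟨S, hSm, hSD, hSint⟩ := NPaux3.exists_slice hHm hHpos hHi hY hDm hd0 hdtop
    have hdisjS : Disjoint {ω | a₀ * H ω < G ω} S := hdisj.mono_right hSD
    have hAm : MeasurableSet ({ω | a₀ * H ω < G ω} ∪ S) := (hsm a₀).union hSm
    have hlev : ∫ ω, H ω * ({ω | a₀ * H ω < G ω} ∪ S).indicator (fun _ => (1:ℝ)) ω ∂μ = x := by
      rw [integral_mul_indicator hAm,
        setIntegral_union hdisjS hSm hHi.integrableOn hHi.integrableOn, hSint]
      rw [hφ] at hstep3 ⊢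
      simp only []
      linarith
    refine ⟨{ω | a₀ * H ω < G ω} ∪ S, hAm, le_of_eq hlev, ?_⟩
    intro X hXm hX0 hX1 hXf
    refine NP_opt hGm hGpos hGi hHm hHpos hHi ha₀0 hAm ?_ ?_ hlev hXm hX0 hX1 hXf
    · intro ω hω
      rcases hω with h | h
      · exact le_of_lt h
      · exact (show G ω = a₀ * H ω from hSD h).ge
    · intro ω hω
      have : ¬ a₀ * H ω < G ω := fun hc => hω (Or.inl hc)
      linarith

lemma integral_mul_combo (hGm : Measurable G) (hGpos : ∀ ω, 0 ≤ G ω) (hGi : Integrable G μ)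
    {X1 X2 : Ω → ℝ} (h1m : Measurable X1) (h10 : ∀ ω, 0 ≤ X1 ω) (h11 : ∀ ω, X1 ω ≤ 1)
    (h2m : Measurable X2) (h20 : ∀ ω, 0 ≤ X2 ω) (h21 : ∀ ω, X2 ω ≤ 1) (a b : ℝ) :
    ∫ ω, G ω * (a * X1 ω + b * X2 ω) ∂μ
      = a * ∫ ω, G ω * X1 ω ∂μ + b * ∫ ω, G ω * X2 ω ∂μ := by
  have hI1 := integrable_mul_test hGm hGpos hGi h1m h10 h11
  have hI2 := integrable_mul_test hGm hGpos hGi h2m h20 h21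
  have e1 : (fun ω => G ω * (a * X1 ω + b * X2 ω))
      = fun ω => a * (G ω * X1 ω) + b * (G ω * X2 ω) := funext fun ω => by ring
  rw [e1]
  have I1 : ∫ ω, (a * (G ω * X1 ω) + b * (G ω * X2 ω)) ∂μ
      = (∫ ω, a * (G ω * X1 ω) ∂μ) + ∫ ω, b * (G ω * X2 ω) ∂μ :=
    integral_add (hI1.const_mul a) (hI2.const_mul b)
  rw [I1, integral_const_mul, integral_const_mul]

end NPmain

end NPsection


/-- Condition C1: If `𝒢 = {Ĝ}` and `ℋ = {Ĥ}` are singletons of integrable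
nonnegative random variables and there exists an `𝓕`-measurable random variable with
continuous c.d.f. under `ℙ`, then `V₁ = V` on `(0,∞)`, for every `x > 0` a pure test
attains both values, and `V₁` is continuous, concave, and non-decreasing on `(0,∞)`. -/
theorem stmt_12 {Ω : Type*} [MeasurableSpace Ω] (μ : MeasureTheory.Measure Ω)
    [MeasureTheory.IsProbabilityMeasure μ]
    (Ghat Hhat : Ω → ℝ)
    (hGm : Measurable Ghat) (hGpos : ∀ ω, 0 ≤ Ghat ω) (hGi : MeasureTheory.Integrable Ghat μ)
    (hHm : Measurable Hhat) (hHpos : ∀ ω, 0 ≤ Hhat ω) (hHi : MeasureTheory.Integrable Hhat μ)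
    (hY : ∃ Y : Ω → ℝ, Measurable Y ∧ Continuous fun y : ℝ => (μ {ω | Y ω < y}).toReal) :
    (∀ x : ℝ, 0 < x → QH.V1 μ {Ghat} {Hhat} x = QH.V μ {Ghat} {Hhat} x) ∧
    (∀ x : ℝ, 0 < x → ∃ A : Set Ω, MeasurableSet A ∧
      Set.indicator A (fun _ => (1 : ℝ)) ∈ QH.Tests μ {Hhat} x ∧
      QH.powerInf μ {Ghat} (Set.indicator A (fun _ => (1 : ℝ))) = QH.V μ {Ghat} {Hhat} x ∧
      QH.powerInf μ {Ghat} (Set.indicator A (fun _ => (1 : ℝ))) = QH.V1 μ {Ghat} {Hhat} x) ∧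
    ContinuousOn (QH.V1 μ {Ghat} {Hhat}) (Set.Ioi 0) ∧
    ConcaveOn ℝ (Set.Ioi 0) (QH.V1 μ {Ghat} {Hhat}) ∧
    MonotoneOn (QH.V1 μ {Ghat} {Hhat}) (Set.Ioi 0) := by
  classical
  have hpow : ∀ X : Ω → ℝ, QH.powerInf μ {Ghat} X = ∫ ω, Ghat ω * X ω ∂μ := by
    intro X
    rw [QH.powerInf, Set.image_singleton, csInf_singleton]
  have master : ∀ x : ℝ, 0 < x → ∃ A : Set Ω, MeasurableSet A ∧
      Set.indicator A (fun _ => (1 : ℝ)) ∈ QH.Tests μ {Hhat} x ∧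
      (∀ X ∈ QH.Tests μ {Hhat} x, ∫ ω, Ghat ω * X ω ∂μ
        ≤ ∫ ω, Ghat ω * A.indicator (fun _ => (1:ℝ)) ω ∂μ) ∧
      QH.V μ {Ghat} {Hhat} x = ∫ ω, Ghat ω * A.indicator (fun _ => (1:ℝ)) ω ∂μ ∧
      QH.V1 μ {Ghat} {Hhat} x = ∫ ω, Ghat ω * A.indicator (fun _ => (1:ℝ)) ω ∂μ := by
    intro x hx
    obtain ⟨A, hAm, hAlev, hAopt⟩ := NPmain.exists_npA hGm hGpos hGi hHm hHpos hHi hY hx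
    have hicc : ∀ ω, A.indicator (fun _ => (1:ℝ)) ω ∈ Set.Icc (0:ℝ) 1 := by
      intro ω; by_cases h : ω ∈ A <;> simp [h]
    have htest : Set.indicator A (fun _ => (1 : ℝ)) ∈ QH.Tests μ {Hhat} x := by
      refine ⟨⟨measurable_const.indicator hAm, hicc⟩, ?_⟩
      intro h hh
      rw [Set.mem_singleton_iff] at hh
      subst hh
      exact hAlev
    have hopt' : ∀ X ∈ QH.Tests μ {Hhat} x, ∫ ω, Ghat ω * X ω ∂μ
        ≤ ∫ ω, Ghat ω * A.indicator (fun _ => (1:ℝ)) ω ∂μ := by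
      rintro X ⟨⟨hXm, hX01⟩, hXc⟩
      exact hAopt X hXm (fun ω => (hX01 ω).1) (fun ω => (hX01 ω).2) (hXc Hhat rfl)
    have hgreat : IsGreatest (QH.powerInf μ {Ghat} '' QH.Tests μ {Hhat} x)
        (∫ ω, Ghat ω * A.indicator (fun _ => (1:ℝ)) ω ∂μ) := by
      constructor
      · exact ⟨_, htest, hpow _⟩
      · rintro r ⟨X, hX, rfl⟩
        rw [hpow]
        exact hopt' X hX
    have hpure : Set.indicator A (fun _ => (1 : ℝ))
        ∈ {X ∈ QH.Tests μ {Hhat} x | ∀ ω, X ω = 0 ∨ X ω = 1} := by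
      refine ⟨htest, fun ω => ?_⟩
      by_cases h : ω ∈ A
      · exact Or.inr (by simp [h])
      · exact Or.inl (by simp [h])
    have hgreat1 : IsGreatest (QH.powerInf μ {Ghat} ''
        {X ∈ QH.Tests μ {Hhat} x | ∀ ω, X ω = 0 ∨ X ω = 1})
        (∫ ω, Ghat ω * A.indicator (fun _ => (1:ℝ)) ω ∂μ) := by
      constructor
      · exact ⟨_, hpure, hpow _⟩
      · rintro r ⟨X, hX, rfl⟩
        rw [hpow]
        exact hopt' X hX.1
    exact ⟨A, hAm, htest, hopt', hgreat.csSup_eq, hgreat1.csSup_eq⟩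
  have hmono : MonotoneOn (QH.V1 μ {Ghat} {Hhat}) (Set.Ioi 0) := by
    intro x hx y hy hxy
    obtain ⟨Ax, hAxm, hAxt, hAxopt, hVx, hV1x⟩ := master x hx
    obtain ⟨Ay, hAym, hAyt, hAyopt, hVy, hV1y⟩ := master y hy
    rw [hV1x, hV1y]
    exact hAyopt _ ⟨hAxt.1, fun h hh => le_trans (hAxt.2 h hh) hxy⟩
  have hconc : ConcaveOn ℝ (Set.Ioi 0) (QH.V1 μ {Ghat} {Hhat}) := by
    refine ⟨convex_Ioi 0, ?_⟩
    intro x hx y hy a b ha hb hab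
    simp only [smul_eq_mul]
    rw [Set.mem_Ioi] at hx hy
    have hz : 0 < a * x + b * y := by
      rcases ha.eq_or_lt with h | h
      · have hb1 : b = 1 := by linarith
        rw [← h, hb1]
        simpa using hy
      · have h1 : 0 < a * x := mul_pos h hx
        have h2 : 0 ≤ b * y := mul_nonneg hb (le_of_lt hy)
        linarith
    obtain ⟨Ax, hAxm, hAxt, hAxopt, hVx, hV1x⟩ := master x hx
    obtain ⟨Ay, hAym, hAyt, hAyopt, hVy, hV1y⟩ := master y hy
    obtain ⟨Az, hAzm, hAzt, hAzopt, hVz, hV1z⟩ := master (a * x + b * y) hz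
    set ix : Ω → ℝ := Ax.indicator (fun _ => (1:ℝ)) with hix
    set iy : Ω → ℝ := Ay.indicator (fun _ => (1:ℝ)) with hiy
    have hixm : Measurable ix := measurable_const.indicator hAxm
    have hiym : Measurable iy := measurable_const.indicator hAym
    have hix0 : ∀ ω, 0 ≤ ix ω := fun ω => by by_cases h : ω ∈ Ax <;> simp [hix, h]
    have hix1 : ∀ ω, ix ω ≤ 1 := fun ω => by by_cases h : ω ∈ Ax <;> simp [hix, h]
    have hiy0 : ∀ ω, 0 ≤ iy ω := fun ω => by by_cases h : ω ∈ Ay <;> simp [hiy, h]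
    have hiy1 : ∀ ω, iy ω ≤ 1 := fun ω => by by_cases h : ω ∈ Ay <;> simp [hiy, h]
    have hcomboG := NPmain.integral_mul_combo hGm hGpos hGi hixm hix0 hix1 hiym hiy0 hiy1 a b
    have hcomboH := NPmain.integral_mul_combo hHm hHpos hHi hixm hix0 hix1 hiym hiy0 hiy1 a b
    have hXtest : (fun ω => a * ix ω + b * iy ω) ∈ QH.Tests μ {Hhat} (a * x + b * y) := by
      refine ⟨⟨(hixm.const_mul a).add (hiym.const_mul b), fun ω => ?_⟩, ?_⟩
      · simp only [Set.mem_Icc]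
        constructor
        · have hn1 := mul_nonneg ha (hix0 ω)
          have hn2 := mul_nonneg hb (hiy0 ω)
          linarith
        · have h1 : a * ix ω ≤ a * 1 := mul_le_mul_of_nonneg_left (hix1 ω) ha
          have h2 : b * iy ω ≤ b * 1 := mul_le_mul_of_nonneg_left (hiy1 ω) hb
          linarith
      · intro h hh
        rw [Set.mem_singleton_iff] at hh
        subst hh
        rw [hcomboH]
        have h1 : ∫ ω, h ω * ix ω ∂μ ≤ x := hAxt.2 h rfl
        have h2 : ∫ ω, h ω * iy ω ∂μ ≤ y := hAyt.2 h rfl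
        have hn1 := mul_le_mul_of_nonneg_left h1 ha
        have hn2 := mul_le_mul_of_nonneg_left h2 hb
        linarith
    have hval := hAzopt _ hXtest
    rw [hcomboG] at hval
    rw [hV1x, hV1y, hV1z]
    exact hval
  refine ⟨?_, ?_, hconc.continuousOn isOpen_Ioi, hconc, hmono⟩
  · intro x hx
    obtain ⟨A, hAm, hAt, hAopt, hV, hV1⟩ := master x hx
    rw [hV, hV1]
  · intro x hx
    obtain ⟨A, hAm, hAt, hAopt, hV, hV1⟩ := master x hx
    exact ⟨A, hAm, hAt, by rw [hpow, hV], by rw [hpow, hV1]⟩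
end
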